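/- arXiv:cs/0110040 — 5 statements merged into one kernel-verified Lean document; each statement's English description precedes it below -/
import Mathlib

section
/- A language L ⊆ Σ* is accepted by some finite automaton if and only if the right-invariant equivalence relation x ∼ y defined by (∀ z ∈ Σ*, xz ∈ L ↔ yz ∈ L) has finitely many equivalence classes. -/
private def Ncl {α : Type} (L : Language α) (x : List α) : Set (List α) :=
  { y : List α | ∀ z : List α, x ++ z ∈ L ↔ y ++ z ∈ L }

private lemma Ncl_self {α : Type} (L : Language α) (x : List α) : x ∈ Ncl L x :=
  fun _ => Iff.rfl

private lemma Ncl_all {α : Type} {L : Language α} {x x' : List α} (h : Ncl L x = Ncl L x') :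
    ∀ z, x ++ z ∈ L ↔ x' ++ z ∈ L := by
  have : x' ∈ Ncl L x := h ▸ Ncl_self L x'
  exact this

private lemma Ncl_append {α : Type} {L : Language α} {x x' : List α} (h : Ncl L x = Ncl L x')
    (w : List α) : Ncl L (x ++ w) = Ncl L (x' ++ w) := by
  ext y
  constructor <;> intro hy z <;>
    [rw [List.append_assoc, ← Ncl_all h (w ++ z), ← List.append_assoc];
     rw [List.append_assoc, Ncl_all h (w ++ z), ← List.append_assoc]] <;>
    exact hy z

/-- Myhill–Nerode: a language `L` over a finite nonempty alphabet is accepted by a finite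
automaton iff the right-invariant equivalence `x ∼ y ↔ ∀ z, xz ∈ L ↔ yz ∈ L` has finitely
many equivalence classes. -/
theorem myhill_nerode {α : Type} [Fintype α] [Nonempty α] (L : Language α) :
    L.IsRegular ↔
      Finite { S : Set (List α) // ∃ x : List α,
        S = { y : List α | ∀ z : List α, x ++ z ∈ L ↔ y ++ z ∈ L } } := by
  constructor
  · rintro ⟨σ, fin, M, hM⟩
    have : Finite σ := Finite.of_fintype σ
    apply Finite.of_injective (fun S => M.eval (Classical.choose S.2))
    intro S₁ S₂ h
    have h₁ := Classical.choose_spec S₁.2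
    have h₂ := Classical.choose_spec S₂.2
    set x₁ := Classical.choose S₁.2
    set x₂ := Classical.choose S₂.2
    have key : ∀ z, x₁ ++ z ∈ L ↔ x₂ ++ z ∈ L := by
      intro z
      rw [← hM]
      simp only [DFA.mem_accepts, DFA.eval, DFA.evalFrom_of_append]
      rw [show M.evalFrom M.start x₁ = M.evalFrom M.start x₂ from h]
    apply Subtype.ext
    rw [h₁, h₂]
    ext y
    exact ⟨fun hy z => (key z).symm.trans (hy z), fun hy z => (key z).trans (hy z)⟩
  · intro hfin
    set Q := { S : Set (List α) // ∃ x : List α, S = Ncl L x } with hQ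
    haveI : Finite Q := hfin
    haveI : Fintype Q := Fintype.ofFinite Q
    let M : DFA α Q :=
      { step := fun S a => ⟨Ncl L (Classical.choose S.2 ++ [a]), _, rfl⟩
        start := ⟨Ncl L [], [], rfl⟩
        accept := { S | Classical.choose S.2 ∈ L } }
    have heval : ∀ (w x : List α) (S : Q), S.1 = Ncl L x →
        (M.evalFrom S w).1 = Ncl L (x ++ w) := by
      intro w
      induction w with
      | nil => intro x S hS; simpa using hS
      | cons a w ih =>
        intro x S hS
        have hc : Ncl L (Classical.choose S.2) = Ncl L x :=
          (Classical.choose_spec S.2).symm.trans hS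
        have : (M.step S a).1 = Ncl L (x ++ [a]) := Ncl_append hc [a]
        have := ih (x ++ [a]) (M.step S a) this
        simpa [DFA.evalFrom] using this
    refine ⟨Q, inferInstance, M, ?_⟩
    ext x
    rw [DFA.mem_accepts]
    have h1 : (M.eval x).1 = Ncl L x := by
      have := heval x [] M.start rfl
      rw [List.nil_append] at this
      exact this
    have h2 : Ncl L (Classical.choose (M.eval x).2) = Ncl L x :=
      (Classical.choose_spec (M.eval x).2).symm.trans h1
    have := Ncl_all h2 []
    simp only [List.append_nil] at this
    change Classical.choose (M.eval x).2 ∈ L ↔ x ∈ L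
    exact this
end

section
/- If L ⊆ Σ* is regular, then there exists a constant c (depending only on L) such that for every x ∈ Σ* and every n ≥ 1, if y is the n-th string (in a fixed computable enumeration of Σ*) belonging to L_x = { y : xy ∈ L }, then C(y) ≤ C(n) + c. -/
/-- Plain conditional Kolmogorov complexity `C(x|y)` relative to the machine `φ`:
the length of a shortest program `p` with `φ p y = x`. -/
noncomputable def kolC (φ : List Bool → List Bool → Part (List Bool)) (x y : List Bool) : ℕ :=
  sInf {n | ∃ p : List Bool, p.length = n ∧ x ∈ φ p y}

/-- Unconditional Kolmogorov complexity `C(x) = C(x|ε)`. -/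
noncomputable def kolCp (φ : List Bool → List Bool → Part (List Bool)) (x : List Bool) : ℕ :=
  kolC φ x []

/-- `φ` is a universal partial computable function: it is partial computable and
simulates every partial computable `ψ` with at most constant overhead in program length. -/
def IsUniversal (φ : List Bool → List Bool → Part (List Bool)) : Prop :=
  Partrec₂ φ ∧ ∀ ψ : List Bool → List Bool → Part (List Bool), Partrec₂ ψ →
    ∃ c : ℕ, ∀ p y x, x ∈ ψ p y → ∃ q : List Bool, x ∈ φ q y ∧ q.length ≤ p.length + c

/-- The `k`-th binary string in length-lexicographic order (standard bijection `ℕ ≃ {0,1}*`). -/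
def natToStr (n : ℕ) : List Bool := (Nat.bits (n + 1)).reverse.tail

namespace KCAux

/-! ### The inverse of `natToStr` -/

def stp (a : ℕ) (b : Bool) : ℕ := 2 * a + cond b 1 0

def strToNat (s : List Bool) : ℕ := s.foldl stp 1 - 1

lemma foldl_stp_pos (s : List Bool) : ∀ m, 0 < m → 0 < s.foldl stp m := by
  induction s with
  | nil => intro m hm; simpa
  | cons b s ih =>
    intro m hm
    simp only [List.foldl_cons]
    exact ih _ (by cases b <;> simp [stp] <;> omega)

lemma bits_cons (m : ℕ) (hm : m ≠ 0) : m.bits = m.bodd :: (m / 2).bits := by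
  conv_lhs => rw [← Nat.bit_bodd_div2 m]
  rw [Nat.bits_append_bit _ _ ?_, Nat.div2_val]
  intro h0
  cases hb : m.bodd
  · exfalso; apply hm
    have := Nat.bit_bodd_div2 m
    rw [hb, h0] at this
    simpa [Nat.bit] using this.symm
  · rfl

lemma bodd_eq_decide (m : ℕ) : m.bodd = decide (m % 2 = 1) := by
  rw [Nat.mod_two_of_bodd]
  cases m.bodd <;> simp

lemma bits_foldl (s : List Bool) : ∀ m, 0 < m → (s.foldl stp m).bits = s.reverse ++ m.bits := by
  induction s with
  | nil => intro m _; simp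
  | cons b s ih =>
    intro m hm
    rw [List.foldl_cons, ih _ (by cases b <;> simp [stp] <;> omega)]
    have hb : (stp m b).bits = b :: m.bits := by
      cases b
      · simpa [stp] using Nat.bit0_bits m (by omega)
      · simpa [stp] using Nat.bit1_bits m
    rw [hb]; simp

lemma foldl_reverse_bits (m : ℕ) : ∃ e : ℕ, ∀ a : ℕ, (m.bits.reverse.foldl stp a) = a * 2 ^ e + m := by
  induction m using Nat.strong_induction_on with
  | _ m ih =>
    rcases Nat.eq_zero_or_pos m with h0 | hpos
    · exact ⟨0, by simp [h0]⟩
    · obtain ⟨e, he⟩ := ih (m / 2) (Nat.div_lt_self hpos (by norm_num))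
      refine ⟨e + 1, fun a => ?_⟩
      rw [bits_cons m hpos.ne', List.reverse_cons, List.foldl_append, he, List.foldl_cons,
        List.foldl_nil, show a * 2 ^ (e + 1) = 2 * (a * 2 ^ e) by ring]
      have hmod : cond m.bodd 1 0 = m % 2 := (Nat.mod_two_of_bodd m).symm
      show 2 * (a * 2 ^ e + m / 2) + cond m.bodd 1 0 = 2 * (a * 2 ^ e) + m
      rw [hmod]
      generalize a * 2 ^ e = w
      omega

lemma bits_reverse_head : ∀ m : ℕ, 0 < m → ∃ t, m.bits.reverse = true :: t := by
  intro m
  induction m using Nat.strong_induction_on with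
  | _ m ih =>
    intro hm
    rcases eq_or_lt_of_le (show 1 ≤ m from hm) with h1 | h1
    · exact ⟨[], by rw [← h1]; simp [Nat.one_bits]⟩
    · have hd : 0 < m / 2 := Nat.div_pos (by omega) (by omega)
      obtain ⟨t, ht⟩ := ih (m / 2) (Nat.div_lt_self (by omega) (by omega)) hd
      refine ⟨t ++ [m.bodd], ?_⟩
      rw [bits_cons m (by omega), List.reverse_cons, ht]
      simp

lemma natToStr_strToNat (s : List Bool) : natToStr (strToNat s) = s := by
  have hpos := foldl_stp_pos s 1 one_pos
  have hb := bits_foldl s 1 one_pos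
  unfold natToStr strToNat
  rw [Nat.sub_add_cancel hpos, hb, Nat.one_bits]
  simp

lemma strToNat_natToStr (n : ℕ) : strToNat (natToStr n) = n := by
  obtain ⟨t, ht⟩ := bits_reverse_head (n + 1) (Nat.succ_pos n)
  have hts : natToStr n = t := by unfold natToStr; rw [ht]; rfl
  obtain ⟨e, he⟩ := foldl_reverse_bits (n + 1)
  have h0 := he 0
  rw [ht] at h0
  simp only [List.foldl_cons, zero_mul, zero_add] at h0
  have h1 : t.foldl stp 1 = n + 1 := by
    have : stp 0 true = 1 := by simp [stp]
    rwa [this] at h0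
  rw [hts]
  unfold strToNat
  omega

/-! ### Computability of `natToStr` and `strToNat` -/

def bitsTable : ℕ → List (List Bool) :=
  fun n => Nat.rec [[]] (fun m ih => ih ++ [(decide ((m + 1) % 2 = 1)) :: ih.getD ((m + 1) / 2) []]) n

lemma bitsTable_succ (n : ℕ) : bitsTable (n + 1)
    = bitsTable n ++ [(decide ((n + 1) % 2 = 1)) :: (bitsTable n).getD ((n + 1) / 2) []] := rfl

lemma bitsTable_length (n : ℕ) : (bitsTable n).length = n + 1 := by
  induction n with
  | zero => rfl
  | succ n ih => rw [bitsTable_succ]; simp [ih]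

lemma bitsTable_getD : ∀ n, ∀ j ≤ n, (bitsTable n).getD j [] = Nat.bits j := by
  intro n
  induction n with
  | zero =>
    intro j hj
    interval_cases j
    simp [bitsTable]
  | succ n ih =>
    intro j hj
    have hlen := bitsTable_length n
    rcases Nat.lt_or_ge j (n + 1) with h | h
    · rw [bitsTable_succ, List.getD_append _ _ _ _ (by omega)]
      exact ih j (by omega)
    · have hj' : j = n + 1 := by omega
      subst hj'
      rw [bitsTable_succ, List.getD_append_right _ _ _ _ (by omega)]
      have h2 : (n + 1) / 2 ≤ n := by omega
      rw [ih _ h2]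
      simp only [hlen]
      rw [show n + 1 - (n + 1) = 0 by omega]
      simp only [List.getD_cons_zero]
      rw [← bodd_eq_decide, ← bits_cons (n + 1) (Nat.succ_ne_zero n)]

lemma natToStr_eq (n : ℕ) :
    natToStr n = ((bitsTable (n + 1)).getD (n + 1) []).reverse.tail := by
  rw [bitsTable_getD (n + 1) (n + 1) le_rfl]; rfl

lemma primrec_bitsTable : Primrec bitsTable := by
  have h : Primrec₂ (fun (_ : ℕ) (p : ℕ × List (List Bool)) =>
      p.2 ++ [(decide ((p.1 + 1) % 2 = 1)) :: p.2.getD ((p.1 + 1) / 2) []]) := by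
    have p1 : Primrec fun q : ℕ × (ℕ × List (List Bool)) => q.2.1 :=
      Primrec.fst.comp Primrec.snd
    have p2 : Primrec fun q : ℕ × (ℕ × List (List Bool)) => q.2.2 :=
      Primrec.snd.comp Primrec.snd
    have hdec : Primrec fun q : ℕ × (ℕ × List (List Bool)) => decide ((q.2.1 + 1) % 2 = 1) :=
      PrimrecPred.decide (Primrec.eq.comp (Primrec.nat_mod.comp (Primrec.succ.comp p1) (Primrec.const 2))
        (Primrec.const 1))
    have hgetD : Primrec fun q : ℕ × (ℕ × List (List Bool)) => q.2.2.getD ((q.2.1 + 1) / 2) [] :=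
      (Primrec.list_getD ([] : List Bool)).comp p2
        (Primrec.nat_div.comp (Primrec.succ.comp p1) (Primrec.const 2))
    exact Primrec.list_append.comp p2
      (Primrec.list_cons.comp (Primrec.list_cons.comp hdec hgetD) (Primrec.const []))
  exact (Primrec.nat_rec' Primrec.id (Primrec.const [[]]) h).of_eq fun n => rfl

lemma primrec_natToStr : Primrec natToStr := by
  have h : Primrec fun n : ℕ => ((bitsTable (n + 1)).getD (n + 1) []).reverse.tail :=
    Primrec.list_tail.comp (Primrec.list_reverse.comp
      ((Primrec.list_getD ([] : List Bool)).comp (primrec_bitsTable.comp Primrec.succ)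
        Primrec.succ))
  exact h.of_eq fun n => (natToStr_eq n).symm

lemma primrec_strToNat : Primrec strToNat := by
  have h : Primrec₂ (fun (_ : List Bool) (p : ℕ × Bool) => 2 * p.1 + cond p.2 1 0) := by
    have p1 : Primrec fun q : List Bool × (ℕ × Bool) => q.2.1 := Primrec.fst.comp Primrec.snd
    have p2 : Primrec fun q : List Bool × (ℕ × Bool) => q.2.2 := Primrec.snd.comp Primrec.snd
    exact Primrec.nat_add.comp (Primrec.nat_mul.comp (Primrec.const 2) p1)
      (Primrec.cond p2 (Primrec.const 1) (Primrec.const 0))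
  have h2 : Primrec fun s : List Bool => s.foldl stp 1 :=
    (Primrec.list_foldl Primrec.id (Primrec.const 1) h).of_eq fun l => rfl
  exact (Primrec.nat_sub.comp h2 (Primrec.const 1)).of_eq fun l => rfl

/-! ### Counting accepted indices -/

/-- count of accepted indices `≤ k` -/
def cntF (a : ℕ → Bool) (k : ℕ) : ℕ := (List.range (k + 1)).foldl (fun c j => c + cond (a j) 1 0) 0

lemma foldl_count (a : ℕ → Bool) : ∀ (l : List ℕ) (c : ℕ),
    l.foldl (fun c j => c + cond (a j) 1 0) c = c + l.countP a := by
  intro l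
  induction l with
  | nil => intro c; simp
  | cons x l ih =>
    intro c
    rw [List.foldl_cons, ih, List.countP_cons]
    cases h : a x <;> simp [h] <;> omega

lemma cntF_eq_countP (a : ℕ → Bool) (k : ℕ) : cntF a k = (List.range (k + 1)).countP a := by
  rw [cntF, foldl_count]; omega

lemma cntF_lt (a : ℕ → Bool) {m k : ℕ} (hmk : m < k) (hk : a k = true) :
    cntF a m < cntF a k := by
  rw [cntF_eq_countP, cntF_eq_countP]
  have h1 : (List.range (m + 1)).countP a ≤ (List.range k).countP a :=
    ((List.range_sublist).2 (by omega)).countP_le (p := a)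
  have h2 : (List.range (k + 1)).countP a = (List.range k).countP a + 1 := by
    rw [List.range_succ, List.countP_append]
    simp [List.countP_cons, hk]
  omega

lemma primrec_cntF {a : ℕ → Bool} (ha : Primrec a) : Primrec (cntF a) := by
  have h : Primrec₂ (fun (_ : ℕ) (p : ℕ × ℕ) => p.1 + cond (a p.2) 1 0) := by
    have p1 : Primrec fun q : ℕ × (ℕ × ℕ) => q.2.1 := Primrec.fst.comp Primrec.snd
    have p2 : Primrec fun q : ℕ × (ℕ × ℕ) => q.2.2 := Primrec.snd.comp Primrec.snd
    exact Primrec.nat_add.comp p1 (Primrec.cond (ha.comp p2) (Primrec.const 1) (Primrec.const 0))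
  exact (Primrec.list_foldl (Primrec.list_range.comp Primrec.succ) (Primrec.const 0) h).of_eq
    fun k => rfl

lemma card_filter_range (p : ℕ → Bool) (n : ℕ) [DecidablePred fun j => p j = true] :
    ((Finset.range n).filter (fun j => p j = true)).card = (List.range n).countP p := by
  induction n with
  | zero => simp
  | succ n ih =>
    rw [Finset.range_add_one, List.range_succ, List.countP_append, Finset.filter_insert]
    by_cases h : p n = true
    · rw [if_pos h, Finset.card_insert_of_notMem (by simp)]
      simp [h, ih, List.countP_cons]
    · rw [if_neg h]
      rw [Bool.not_eq_true] at h
      simp [h, ih, List.countP_cons]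

/-! ### The machine searching for the `n`-th accepted string -/

def psiAux (φ : List Bool → List Bool → Part (List Bool)) (a : ℕ → Bool)
    (p y : List Bool) : Part (List Bool) :=
  (φ p y).bind fun s =>
    (Nat.rfind fun k => Part.some (a k && decide (cntF a k = strToNat s))).map natToStr

lemma psiAux_partrec {φ : List Bool → List Bool → Part (List Bool)} (hφ : Partrec₂ φ)
    {a : ℕ → Bool} (ha : Primrec a) : Partrec₂ (psiAux φ a) := by
  have hpred : Computable₂ fun (s : List Bool) (k : ℕ) =>
      (a k && decide (cntF a k = strToNat s)) := by
    have hp : Primrec₂ fun (s : List Bool) (k : ℕ) =>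
        (a k && decide (cntF a k = strToNat s)) := by
      have p1 : Primrec fun q : List Bool × ℕ => q.1 := Primrec.fst
      have p2 : Primrec fun q : List Bool × ℕ => q.2 := Primrec.snd
      have hdec : Primrec fun q : List Bool × ℕ => decide (cntF a q.2 = strToNat q.1) :=
        PrimrecPred.decide (Primrec.eq.comp ((primrec_cntF ha).comp p2) (primrec_strToNat.comp p1))
      exact (Primrec.cond (ha.comp p2) hdec (Primrec.const false)).of_eq fun q => by
        cases h : a q.2 <;> simp [h]
    exact hp.to_comp
  have hinner : Partrec fun s : List Bool =>
      (Nat.rfind fun k => Part.some (a k && decide (cntF a k = strToNat s))).map natToStr := by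
    have hr : Partrec fun s : List Bool =>
        Nat.rfind fun k => Part.some (a k && decide (cntF a k = strToNat s)) :=
      Partrec.rfind hpred.partrec₂
    exact hr.map ((primrec_natToStr.to_comp.comp Computable.snd).to₂)
  have : Partrec fun pr : List Bool × List Bool => psiAux φ a pr.1 pr.2 :=
    Partrec.bind hφ ((hinner.comp Computable.snd).to₂)
  exact this

lemma key (φ : List Bool → List Bool → Part (List Bool)) (hφ : IsUniversal φ)
    (a : ℕ → Bool) (ha : Primrec a) :
    ∃ c : ℕ, ∀ (y : List Bool) (n k : ℕ), y = natToStr k → a k = true →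
      cntF a k = n → kolCp φ y ≤ kolCp φ (natToStr n) + c := by
  obtain ⟨c, hc⟩ := hφ.2 (psiAux φ a) (psiAux_partrec hφ.1 ha)
  refine ⟨c, ?_⟩
  intro y n k hy hk hcnt
  obtain ⟨c', hc'⟩ := hφ.2 (fun _ _ => Part.some (natToStr n))
    (Partrec.const' (Part.some (natToStr n)))
  obtain ⟨q₀, hq₀, -⟩ := hc' [] [] (natToStr n) (Part.mem_some _)
  have hSne : {l | ∃ p : List Bool, p.length = l ∧ natToStr n ∈ φ p []}.Nonempty :=
    ⟨q₀.length, q₀, rfl, hq₀⟩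
  obtain ⟨p₀, hp₀len, hp₀⟩ := Nat.sInf_mem hSne
  have hk_rfind : k ∈ Nat.rfind fun k' =>
      Part.some (a k' && decide (cntF a k' = strToNat (natToStr n))) := by
    refine Nat.mem_rfind.2 ?_
    constructor
    · rw [Part.mem_some_iff]
      simp [hk, strToNat_natToStr, hcnt]
    · intro m hm
      rw [Part.mem_some_iff]
      cases ham : a m
      · simp
      · have hlt : cntF a m < n := hcnt ▸ cntF_lt a hm hk
        simp [strToNat_natToStr, Nat.ne_of_lt hlt]
  have hy_mem : y ∈ psiAux φ a p₀ [] := by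
    unfold psiAux
    rw [Part.mem_bind_iff]
    refine ⟨natToStr n, hp₀, ?_⟩
    rw [Part.mem_map_iff]
    exact ⟨k, hk_rfind, hy.symm⟩
  obtain ⟨q, hqmem, hqlen⟩ := hc p₀ [] y hy_mem
  have h1 : kolCp φ y ≤ q.length := Nat.sInf_le ⟨q, rfl, hqmem⟩
  have h2 : kolCp φ (natToStr n) = p₀.length := hp₀len.symm
  omega

end KCAux

open KCAux in
/-- KC-Regularity Lemma: if `L` is regular then there is a constant `c` such that for every
`x` and every `n ≥ 1`, if `y` is the `n`-th string (in the length-lexicographic enumeration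
of `{0,1}*`) belonging to `L_x = {y : xy ∈ L}`, then `C(y) ≤ C(n) + c`. -/
theorem kc_regularity (φ : List Bool → List Bool → Part (List Bool))
    (hφ : IsUniversal φ) (L : Language Bool) (hL : L.IsRegular) :
    ∃ c : ℕ, ∀ (x y : List Bool) (n k : ℕ), 1 ≤ n →
      y = natToStr k → x ++ y ∈ L →
      { j : ℕ | j ≤ k ∧ x ++ natToStr j ∈ L }.ncard = n →
      kolCp φ y ≤ kolCp φ (natToStr n) + c := by
  classical
  obtain ⟨σ, instF, M, hM⟩ := hL
  haveI := instF
  let m := Fintype.card σ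
  let e : σ ≃ Fin m := Fintype.equivFin σ
  let stepF : Fin m × Bool → Fin m := fun p => e (M.step (e.symm p.1) p.2)
  let accB : Fin m → Bool := fun q => decide (e.symm q ∈ M.accept)
  let aFun : Fin m → ℕ → Bool := fun q j => accB ((natToStr j).foldl (fun s b => stepF (s, b)) q)
  have haPrim : ∀ q, Primrec (aFun q) := by
    intro q
    have h1 : Primrec fun t : List Bool => t.foldl (fun s b => stepF (s, b)) q :=
      Primrec.list_foldl Primrec.id (Primrec.const q)
        ((Primrec.dom_finite stepF).comp Primrec.snd)
    exact (Primrec.dom_finite accB).comp (h1.comp primrec_natToStr)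
  choose cf hcf using fun q : Fin m => key φ hφ (aFun q) (haPrim q)
  refine ⟨Finset.univ.sup cf, ?_⟩
  intro x y n k hn hy hxy hcard
  set q : Fin m := e (M.eval x) with hq
  have hfold : ∀ (t : List Bool) (s : σ),
      t.foldl (fun s b => stepF (s, b)) (e s) = e (M.evalFrom s t) := by
    intro t
    induction t with
    | nil => intro s; rfl
    | cons b t ih =>
      intro s
      simp only [List.foldl_cons]
      rw [show stepF (e s, b) = e (M.step s b) by simp [stepF]]
      exact ih (M.step s b)
  have hacc : ∀ j : ℕ, (aFun q j = true) ↔ (x ++ natToStr j ∈ L) := by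
    intro j
    rw [← hM, DFA.mem_accepts]
    have heval : M.eval (x ++ natToStr j) = M.evalFrom (M.eval x) (natToStr j) := by
      simp [DFA.eval, DFA.evalFrom, List.foldl_append]
    rw [heval]
    show accB ((natToStr j).foldl (fun s b => stepF (s, b)) (e (M.eval x))) = true ↔ _
    rw [hfold]
    simp [accB]
  have hk : aFun q k = true := (hacc k).2 (hy ▸ hxy)
  have hset : { j : ℕ | j ≤ k ∧ x ++ natToStr j ∈ L }
      = ↑((Finset.range (k + 1)).filter fun j => aFun q j = true) := by
    ext j
    simp only [Set.mem_setOf_eq, Finset.coe_filter, Finset.mem_range, Nat.lt_succ_iff,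
      Set.mem_setOf_eq, hacc]
  have hcnt : cntF (aFun q) k = n := by
    rw [hset, Set.ncard_coe_finset, card_filter_range] at hcard
    rw [cntF_eq_countP, hcard]
  have hmain := hcf q y n k hy hk hcnt
  exact hmain.trans (Nat.add_le_add_left (Finset.le_sup (Finset.mem_univ q)) _)
end

section
/- The language of standard binary representations of prime numbers is not regular. -/
/-- The standard binary representation (most significant bit first, no leading zeros) of a
natural number `p`: the little-endian binary expansion `Nat.bits p`, reversed. -/
def binRep (p : ℕ) : List Bool := (Nat.bits p).reverse

namespace BinNotReg

/-- The value of a most-significant-bit-first list of bits. -/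
def mval (l : List Bool) : ℕ := l.foldl (fun n b => 2 * n + b.toNat) 0

lemma foldl_eq (l : List Bool) (n : ℕ) :
    l.foldl (fun n b => 2 * n + b.toNat) n = n * 2 ^ l.length + mval l := by
  induction l generalizing n with
  | nil => simp [mval]
  | cons b l ih =>
    have hbl : mval (b :: l) = b.toNat * 2 ^ l.length + mval l := by
      have : mval (b :: l) = l.foldl (fun n b => 2 * n + b.toNat) b.toNat := by
        simp [mval]
      rw [this, ih]
    simp only [List.foldl_cons, List.length_cons, hbl]
    rw [ih]
    ring

lemma mval_append (u v : List Bool) :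
    mval (u ++ v) = mval u * 2 ^ v.length + mval v := by
  have : mval (u ++ v) = v.foldl (fun n b => 2 * n + b.toNat) (mval u) := by
    simp [mval, List.foldl_append]
  rw [this, foldl_eq]

lemma mval_binRep (p : ℕ) : mval (binRep p) = p := by
  induction p using Nat.binaryRec' with
  | zero => simp [binRep, mval]
  | bit b n hn ih =>
    rw [binRep, Nat.bits_append_bit n b hn, List.reverse_cons, mval_append]
    have h1 : mval [b] = b.toNat := by cases b <;> simp [mval]
    rw [binRep] at ih
    simp [h1, ih, Nat.bit_val]
    ring

end BinNotReg

open BinNotReg in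
/-- The language of binary representations of primes is not regular. -/
theorem binary_primes_not_regular :
    ¬ Language.IsRegular { w : List Bool | ∃ p : ℕ, p.Prime ∧ w = binRep p } := by
  rintro ⟨σ, fσ, M, hM⟩
  set n := Fintype.card σ with hn
  obtain ⟨p, hpn, hp⟩ := Nat.exists_infinite_primes (2 ^ n)
  haveI : Fact p.Prime := ⟨hp⟩
  have hx : binRep p ∈ M.accepts := by
    rw [hM]; exact ⟨p, hp, rfl⟩
  have hlen : n ≤ (binRep p).length := by
    rw [binRep, List.length_reverse, Nat.size_eq_bits_len]
    exact le_of_lt (Nat.lt_size.mpr hpn)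
  obtain ⟨a, b, c, hsplit, hablen, hbne, hpump⟩ := M.pumping_lemma hx hlen
  set m := b.length with hm
  have hm1 : 1 ≤ m := List.length_pos_iff.mpr hbne
  have hmn : m ≤ n := by omega
  -- the pumped words
  set W : ℕ → List Bool := fun k => (List.replicate k b).flatten with hW
  have hWsucc : ∀ k, W (k + 1) = b ++ W k := by
    intro k; simp [hW, List.replicate_succ]
  have hW0 : W 0 = [] := by simp [hW]
  have hWlen : ∀ k, (W k).length = k * m := by
    intro k
    induction k with
    | zero => simp [hW0]
    | succ k ih => rw [hWsucc, List.length_append, ih]; ring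
  have hWmem : ∀ k, a ++ W k ++ c ∈ M.accepts := by
    intro k
    apply hpump
    apply Language.append_mem_mul
    · apply Language.append_mem_mul
      · rfl
      · exact Language.join_mem_kstar (fun y hy => List.eq_of_mem_replicate hy)
    · rfl
  set P : ℕ → ℕ := fun k => mval (a ++ W k ++ c) with hPdef
  have hPrime : ∀ k, (P k).Prime ∧ a ++ W k ++ c = binRep (P k) := by
    intro k
    have := hWmem k
    rw [hM] at this
    obtain ⟨r, hr, hw⟩ := this
    have : P k = r := by rw [hPdef]; simp only; rw [hw, mval_binRep]
    rw [this, hw]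
    exact ⟨hr, rfl⟩
  set A := mval a with hA
  set B := mval b with hB
  set C := mval c with hC
  set t := c.length with ht
  have hPform : ∀ k, P k = A * 2 ^ (k * m + t) + mval (W k) * 2 ^ t + C := by
    intro k
    rw [hPdef]
    simp only
    rw [List.append_assoc, mval_append, mval_append, List.length_append, hWlen]
    ring
  have hW1 : mval (W 1) = B := by
    rw [hWsucc, hW0, List.append_nil]
  have hWval : ∀ k, mval (W (k + 1)) = B * 2 ^ (k * m) + mval (W k) := by
    intro k
    rw [hWsucc, mval_append, hWlen]
  have hP1 : P 1 = p := by
    have h1 : a ++ W 1 ++ c = binRep p := by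
      rw [hWsucc, hW0, List.append_nil, hsplit]
    rw [hPdef]; simp only; rw [h1, mval_binRep]
  -- the key divisibility: p ∣ P p
  have hkey : ((2 : ℤ) ^ m - 1) * (mval (W p) : ℤ) = (B : ℤ) * (2 ^ (p * m) - 1) := by
    have : ∀ k, ((2 : ℤ) ^ m - 1) * (mval (W k) : ℤ) = (B : ℤ) * (2 ^ (k * m) - 1) := by
      intro k
      induction k with
      | zero => simp [hW0, mval]
      | succ k ih =>
        have h := hWval k
        have h' : (mval (W (k + 1)) : ℤ) = (B : ℤ) * 2 ^ (k * m) + (mval (W k) : ℤ) := by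
          exact_mod_cast congrArg (Nat.cast : ℕ → ℤ) h
        rw [h', add_mul, one_mul, pow_add]
        linear_combination ih
    exact this p
  have hu : (2 : ZMod p) ^ (p * m) = 2 ^ m := by
    rw [pow_mul, ZMod.pow_card]
  have h2mne : ((2 : ZMod p) ^ m - 1) ≠ 0 := by
    intro h0
    have hcast : (((2 ^ m - 1 : ℕ)) : ZMod p) = 0 := by
      push_cast [Nat.one_le_two_pow]
      exact h0
    rw [ZMod.natCast_eq_zero_iff] at hcast
    have hpos : 0 < 2 ^ m - 1 := by
      have : 2 ≤ 2 ^ m := by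
        calc 2 = 2 ^ 1 := (pow_one 2).symm
        _ ≤ 2 ^ m := Nat.pow_le_pow_right (by norm_num) hm1
      omega
    have hle : p ≤ 2 ^ m - 1 := Nat.le_of_dvd hpos hcast
    have : 2 ^ m ≤ 2 ^ n := Nat.pow_le_pow_right (by norm_num) hmn
    omega
  have hSS : ((mval (W p) : ZMod p)) = (mval (W 1) : ZMod p) := by
    have e1 : ((2 : ZMod p) ^ m - 1) * (mval (W p) : ZMod p)
        = (B : ZMod p) * (2 ^ (p * m) - 1) := by
      have := congrArg (fun z : ℤ => (Int.cast z : ZMod p)) hkey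
      push_cast at this
      exact_mod_cast this
    have e2 : ((2 : ZMod p) ^ m - 1) * (mval (W 1) : ZMod p)
        = (B : ZMod p) * (2 ^ (1 * m) - 1) := by
      have hk1 : ((2 : ℤ) ^ m - 1) * (mval (W 1) : ℤ) = (B : ℤ) * (2 ^ (1 * m) - 1) := by
        rw [hW1, one_mul]; ring
      have := congrArg (fun z : ℤ => (Int.cast z : ZMod p)) hk1
      push_cast at this
      exact_mod_cast this
    rw [hu] at e1
    rw [one_mul] at e2
    have : ((2 : ZMod p) ^ m - 1) * ((mval (W p) : ZMod p) - (mval (W 1) : ZMod p)) = 0 := by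
      rw [mul_sub, e1, e2, sub_self]
    rcases mul_eq_zero.mp this with h | h
    · exact absurd h h2mne
    · exact sub_eq_zero.mp h
  have hdvd : p ∣ P p := by
    rw [← ZMod.natCast_eq_zero_iff]
    have hcastP : ∀ k, ((P k : ℕ) : ZMod p)
        = (A : ZMod p) * 2 ^ (k * m) * 2 ^ t + (mval (W k) : ZMod p) * 2 ^ t + (C : ZMod p) := by
      intro k
      rw [hPform k]
      push_cast [pow_add]
      ring
    rw [hcastP p, hu, hSS, ← hu]
    have : ((P 1 : ℕ) : ZMod p) = 0 := by
      rw [hP1, ZMod.natCast_self]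
    rw [hcastP 1, one_mul] at this
    rw [hu]
    exact this
  -- so P p = p
  have hPp : P p = p := by
    rcases (hPrime p).1.eq_one_or_self_of_dvd p hdvd with h | h
    · exact absurd h hp.ne_one
    · exact h.symm
  -- monotonicity facts
  have hSmono : Monotone fun k => mval (W k) := by
    apply monotone_nat_of_le_succ
    intro k
    rw [hWval k]
    exact Nat.le_add_left _ _
  have hp2 : 2 ≤ p := hp.two_le
  -- case split on A, B
  by_cases hAB : A = 0 ∧ B = 0
  · -- then P 0 = P 1 = p, so binRep p has two different lengths: contradiction
    obtain ⟨hA0, hB0⟩ := hAB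
    have hP0 : P 0 = p := by
      have h0 : P 0 = C := by rw [hPform 0, hA0, hW0]; simp [mval]
      have h1 : P 1 = C := by rw [hPform 1, hA0, hW1, hB0]; simp
      rw [h0, ← h1]; exact hP1
    have hw0 := (hPrime 0).2
    rw [hP0, hW0, List.append_nil, hsplit] at hw0
    have hlen2 := congrArg List.length hw0
    simp only [List.length_append] at hlen2
    omega
  · -- P p > P 1 = p, contradicting P p = p
    have hWle : mval (W 1) ≤ mval (W p) := hSmono (by omega)
    have hlt : P 1 < P p := by
      rw [hPform 1, hPform p]
      rcases Nat.eq_zero_or_pos A with hA0 | hApos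
      · have hBpos : 0 < B := by
          rcases Nat.eq_zero_or_pos B with h | h
          · exact absurd ⟨hA0, h⟩ hAB
          · exact h
        have hW2 : mval (W 1) < mval (W 2) := by
          rw [hWval 1, hW1]
          have : 0 < B * 2 ^ (1 * m) := by positivity
          omega
        have hW2p : mval (W 2) ≤ mval (W p) := hSmono hp2
        have hpow : (0:ℕ) < 2 ^ t := by positivity
        rw [hA0]
        simp only [zero_mul, zero_add]
        have : mval (W 1) * 2 ^ t < mval (W p) * 2 ^ t :=
          (Nat.mul_lt_mul_right hpow).mpr (lt_of_lt_of_le hW2 hW2p)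
        omega
      · have hexp : 1 * m + t < p * m + t := by
          have : 1 * m < p * m := (Nat.mul_lt_mul_right hm1).mpr (by omega)
          omega
        have hpowlt : 2 ^ (1 * m + t) < 2 ^ (p * m + t) :=
          Nat.pow_lt_pow_right (by norm_num) hexp
        have h1 : A * 2 ^ (1 * m + t) < A * 2 ^ (p * m + t) :=
          (Nat.mul_lt_mul_left hApos).mpr hpowlt
        have h2 : mval (W 1) * 2 ^ t ≤ mval (W p) * 2 ^ t :=
          Nat.mul_le_mul_right _ hWle
        omega
    omega
end

section
/- Regular KC-Characterization: For L ⊆ Σ*, let χ(x) ∈ {0,1}^∞ be the characteristic sequence of L_x = { y : xy ∈ L } with respect to the length-lexicographic enumeration y₁, y₂, … of Σ*. Then L is regular if and only if there is a constant c_L such that for all x ∈ Σ* and all n, C(χ(x)_{1:n} | n) ≤ c_L. -/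
open Classical in
/-- The length-`n` prefix `χ_{1:n}` of the characteristic sequence of `L_x = {y : xy ∈ L}`
with respect to the length-lexicographic enumeration of `{0,1}*`. -/
noncomputable def chiPrefix (L : Language Bool) (x : List Bool) (n : ℕ) : List Bool :=
  (List.range n).map fun i => if x ++ natToStr i ∈ L then true else false

/-! ### Auxiliary: binary representation and its inverse -/

def strVal (l : List Bool) : ℕ := l.foldl (fun a b => 2 * a + b.toNat) 1

def strToNat (l : List Bool) : ℕ := strVal l - 1

theorem bits_cons (m : ℕ) (hm : m ≠ 0) : Nat.bits m = m.bodd :: Nat.bits m.div2 := by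
  conv_lhs => rw [← Nat.bit_bodd_div2 m]
  rw [Nat.bits_append_bit]
  intro h
  have h2 := Nat.bodd_add_div2 m
  rw [h] at h2
  cases hb : m.bodd
  · rw [hb] at h2; simp at h2; omega
  · rfl

theorem div2_lt (m : ℕ) (hm : m ≠ 0) : m.div2 < m := by
  rw [Nat.div2_val]; exact Nat.div_lt_self (Nat.pos_of_ne_zero hm) (by norm_num)

theorem foldr_bits (m : ℕ) : (Nat.bits m).foldr (fun b n => 2 * n + b.toNat) 0 = m := by
  induction m using Nat.strong_induction_on with
  | _ m ih =>
    rcases Nat.eq_zero_or_pos m with h | h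
    · simp [h]
    · rw [bits_cons m h.ne', List.foldr_cons, ih m.div2 (div2_lt m h.ne')]
      have := Nat.bodd_add_div2 m
      omega

/-- For `m ≠ 0`, the most significant bit of `m` is `true`. -/
theorem bits_reverse_eq (m : ℕ) (hm : m ≠ 0) :
    (Nat.bits m).reverse = true :: (Nat.bits m).reverse.tail := by
  induction m using Nat.strong_induction_on with
  | _ m ih =>
    rcases Nat.eq_zero_or_pos m.div2 with h | h
    · have h2 := Nat.bodd_add_div2 m
      have hb : m.bodd = true := by cases hb : m.bodd <;> [(rw [hb] at h2; simp at h2; omega); rfl]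
      rw [bits_cons m hm, hb, h, Nat.zero_bits]
      rfl
    · rw [bits_cons m hm, List.reverse_cons, ih m.div2 (div2_lt m hm) h.ne']
      rfl

theorem strVal_natToStr (n : ℕ) : strVal (natToStr n) = n + 1 := by
  have h1 := foldr_bits (n + 1)
  have h2 := bits_reverse_eq (n + 1) (Nat.succ_ne_zero n)
  have h3 : (Nat.bits (n+1)).reverse.foldl (fun a b => 2 * a + b.toNat) 0 = n + 1 := by
    rw [List.foldl_reverse]; exact h1
  rw [h2] at h3
  simpa [strVal, natToStr] using h3

theorem strToNat_natToStr (n : ℕ) : strToNat (natToStr n) = n := by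
  simp [strToNat, strVal_natToStr]

theorem le_foldl_val (l : List Bool) (a : ℕ) : a ≤ l.foldl (fun a b => 2 * a + b.toNat) a := by
  induction l generalizing a with
  | nil => simp
  | cons b l ih => exact le_trans (by omega) (ih (2 * a + b.toNat))

theorem one_le_strVal (l : List Bool) : 1 ≤ strVal l := le_foldl_val l 1

theorem bits_strVal (l : List Bool) : (Nat.bits (strVal l)).reverse = true :: l := by
  induction l using List.reverseRecOn with
  | nil => simp [strVal, Nat.one_bits]
  | append_singleton l b ih =>
    have hM := one_le_strVal l
    have h : strVal (l ++ [b]) = 2 * strVal l + b.toNat := by simp [strVal]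
    rw [h]
    cases b
    · rw [show (2 * strVal l + Bool.toNat false) = 2 * strVal l by simp,
        Nat.bit0_bits _ (by omega), List.reverse_cons, ih]; rfl
    · rw [show (2 * strVal l + Bool.toNat true) = 2 * strVal l + 1 by simp,
        Nat.bit1_bits, List.reverse_cons, ih]; rfl

theorem natToStr_strToNat (l : List Bool) : natToStr (strToNat l) = l := by
  have h : strToNat l + 1 = strVal l := by
    have := one_le_strVal l; simp [strToNat]; omega
  rw [natToStr, h, bits_strVal]; rfl

theorem bits_length_le (m : ℕ) : (Nat.bits m).length ≤ m := by
  induction m using Nat.strong_induction_on with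
  | _ m ih =>
    rcases Nat.eq_zero_or_pos m with h | h
    · simp [h]
    · rw [bits_cons m h.ne']
      have h1 := ih m.div2 (div2_lt m h.ne')
      have h2 := div2_lt m h.ne'
      simp only [List.length_cons]
      omega

theorem natToStr_length_le (n : ℕ) : (natToStr n).length ≤ n := by
  have := bits_length_le (n + 1)
  simp only [natToStr, List.length_tail, List.length_reverse]
  omega

/-! ### Auxiliary: computability of `strToNat` and `natToStr` -/

theorem primrec_strVal : Primrec strVal := by
  have ht : Primrec Bool.toNat := Primrec.dom_bool _
  have : Primrec₂ (fun (a : ℕ) (b : Bool) => 2 * a + b.toNat) :=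
    Primrec₂.comp₂ Primrec.nat_add
      (Primrec₂.comp₂ Primrec.nat_mul (Primrec₂.const 2) Primrec₂.left)
      (ht.comp₂ Primrec₂.right)
  unfold strVal
  simpa [strVal] using Primrec.list_foldl Primrec.id (Primrec.const 1)
    (this.comp (Primrec.fst.comp Primrec.snd) (Primrec.snd.comp Primrec.snd)).to₂

theorem primrec_strToNat : Primrec strToNat := by
  unfold strToNat
  simpa [strToNat] using Primrec.nat_sub.comp primrec_strVal (Primrec.const 1)

/-- One step of binary expansion. -/
def bstep : ℕ × List Bool → ℕ × List Bool :=
  fun p => if p.1 = 0 then p else (p.1.div2, p.1.bodd :: p.2)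

theorem primrec_bstep : Primrec bstep := by
  unfold bstep
  refine Primrec.ite (Primrec.eq.comp Primrec.fst (Primrec.const 0)) Primrec.id ?_
  exact Primrec.pair (Primrec.nat_div2.comp Primrec.fst)
    (Primrec.list_cons.comp (Primrec.nat_bodd.comp Primrec.fst) Primrec.snd)

theorem bstep_zero (l : List Bool) (j : ℕ) : bstep^[j] (0, l) = (0, l) := by
  induction j with
  | zero => rfl
  | succ j ih => rw [Function.iterate_succ_apply, show bstep (0, l) = (0, l) from rfl, ih]

theorem bstep_iter (j : ℕ) : ∀ (m : ℕ) (l : List Bool), m < 2 ^ j →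
    bstep^[j] (m, l) = (0, (Nat.bits m).reverse ++ l) := by
  induction j with
  | zero => intro m l hm; interval_cases m; simp
  | succ j ih =>
    intro m l hm
    rcases Nat.eq_zero_or_pos m with h | h
    · subst h; simp [bstep_zero]
    · rw [Function.iterate_succ_apply, show bstep (m, l) = (m.div2, m.bodd :: l) from if_neg h.ne',
        ih m.div2 _ (by rw [Nat.div2_val]; omega), bits_cons m h.ne', List.reverse_cons,
        List.append_assoc]
      rfl

theorem bstep_eval (m : ℕ) : (bstep^[m] (m, [])).2 = (Nat.bits m).reverse := by
  rw [bstep_iter m m [] (Nat.lt_two_pow_self (n := m))]; simp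

theorem primrec_natToStr : Primrec natToStr := by
  have h1 : Primrec fun n : ℕ => (bstep^[n + 1] (n + 1, [])).2 :=
    Primrec.snd.comp <| Primrec.nat_iterate (Primrec.succ)
      (Primrec.pair Primrec.succ (Primrec.const [])) (primrec_bstep.comp Primrec.snd).to₂
  refine (Primrec.list_tail.comp h1).of_eq fun n => ?_
  rw [bstep_eval, natToStr]

/-! ### Auxiliary: a computable simulator of a DFA -/

section Forward

open Classical

variable {σ : Type} [Fintype σ] (M : DFA Bool σ)

/-- Transition table, as a list of encoded states. -/
noncomputable def tList (b : Bool) : List ℕ :=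
  (List.finRange (Fintype.card σ)).map fun i =>
    ((Fintype.equivFin σ) (M.step ((Fintype.equivFin σ).symm i) b)).val

/-- Transition function on encoded states. -/
noncomputable def tFun : ℕ → Bool → ℕ := fun s b => (tList M b).getD s 0

/-- Acceptance table. -/
noncomputable def aList : List Bool :=
  (List.finRange (Fintype.card σ)).map fun i =>
    if ((Fintype.equivFin σ).symm i) ∈ M.accept then true else false

/-- The computable function computing `chiPrefix` from an encoded state and a length. -/
noncomputable def dfaF : List Bool → List Bool → List Bool := fun p y =>
  (List.range (strToNat y)).map fun i =>
    (aList M).getD ((natToStr i).foldl (tFun M) (strToNat p)) false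

theorem primrec_tFun : Primrec₂ (tFun M) := by
  have hb : Primrec fun b : Bool => tList M b :=
    (Primrec.cond Primrec.id (Primrec.const (tList M true)) (Primrec.const (tList M false))).of_eq
      fun b => by cases b <;> rfl
  exact ((Primrec.list_getD 0).comp (hb.comp Primrec.snd) Primrec.fst).to₂

theorem primrec_dfaF : Primrec₂ (dfaF M) := by
  have hfold : Primrec fun q : (List Bool × List Bool) × ℕ =>
      (natToStr q.2).foldl (tFun M) (strToNat q.1.1) := by
    have := Primrec.list_foldl (f := fun q : (List Bool × List Bool) × ℕ => natToStr q.2)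
      (g := fun q : (List Bool × List Bool) × ℕ => strToNat q.1.1)
      (h := fun _ sb => tFun M sb.1 sb.2)
      (primrec_natToStr.comp Primrec.snd)
      (primrec_strToNat.comp (Primrec.fst.comp Primrec.fst))
      (((primrec_tFun M).comp (Primrec.fst.comp Primrec.snd)
        (Primrec.snd.comp Primrec.snd)).to₂)
    exact this
  have hin : Primrec₂ fun (q : List Bool × List Bool) (i : ℕ) =>
      (aList M).getD ((natToStr i).foldl (tFun M) (strToNat q.1)) false :=
    ((Primrec.list_getD false).comp (Primrec.const (aList M)) hfold).to₂
  exact (Primrec.list_map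
    (Primrec.list_range.comp (primrec_strToNat.comp Primrec.snd)) hin).to₂

theorem tFun_eval (q : σ) (b : Bool) :
    tFun M ((Fintype.equivFin σ) q).val b = ((Fintype.equivFin σ) (M.step q b)).val := by
  have h : ((Fintype.equivFin σ) q).val < (List.finRange (Fintype.card σ)).length := by
    simp [((Fintype.equivFin σ) q).isLt]
  rw [tFun, tList, List.getD_eq_getElem _ _ (by simpa using h)]
  simp

theorem foldl_tFun (l : List Bool) (q : σ) :
    l.foldl (tFun M) ((Fintype.equivFin σ) q).val = ((Fintype.equivFin σ) (M.evalFrom q l)).val := by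
  induction l generalizing q with
  | nil => rfl
  | cons b l ih => rw [List.foldl_cons, tFun_eval, ih]; rfl

theorem aList_eval (q : σ) :
    (aList M).getD ((Fintype.equivFin σ) q).val false = (if q ∈ M.accept then true else false) := by
  have h : ((Fintype.equivFin σ) q).val < (List.finRange (Fintype.card σ)).length := by
    simp [((Fintype.equivFin σ) q).isLt]
  rw [aList, List.getD_eq_getElem _ _ (by simpa using h)]
  simp

theorem dfaF_correct (L : Language Bool) (hM : M.accepts = L) (x : List Bool) (n : ℕ) :
    dfaF M (natToStr ((Fintype.equivFin σ) (M.eval x)).val) (natToStr n) = chiPrefix L x n := by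
  rw [dfaF, chiPrefix, strToNat_natToStr, strToNat_natToStr]
  refine List.map_congr_left fun i _ => ?_
  rw [foldl_tFun, aList_eval]
  refine if_congr ?_ rfl rfl
  rw [← hM, DFA.mem_accepts, DFA.eval, DFA.evalFrom_of_append]

end Forward

/-! ### Auxiliary facts about `kolC` for a universal machine -/

theorem exists_prog {φ : List Bool → List Bool → Part (List Bool)} (hφ : IsUniversal φ)
    (s y : List Bool) : ∃ p : List Bool, s ∈ φ p y := by
  obtain ⟨c, hc⟩ := hφ.2 (fun _ _ => Part.some s) (Computable₂.partrec₂ (by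
    exact (Computable.const s).to₂))
  obtain ⟨q, hq, -⟩ := hc [] y s (Part.mem_some s)
  exact ⟨q, hq⟩

theorem kolC_witness {φ : List Bool → List Bool → Part (List Bool)} (hφ : IsUniversal φ)
    {s y : List Bool} {c : ℕ} (h : kolC φ s y ≤ c) :
    ∃ p : List Bool, p.length ≤ c ∧ s ∈ φ p y := by
  have hne : {n | ∃ p : List Bool, p.length = n ∧ s ∈ φ p y}.Nonempty := by
    obtain ⟨p, hp⟩ := exists_prog hφ s y
    exact ⟨p.length, p, rfl, hp⟩
  obtain ⟨p, hp1, hp2⟩ := Nat.sInf_mem hne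
  exact ⟨p, by rw [hp1]; exact h, hp2⟩

theorem kolC_le {φ : List Bool → List Bool → Part (List Bool)} {s y p : List Bool}
    (h : s ∈ φ p y) : kolC φ s y ≤ p.length :=
  Nat.sInf_le ⟨p, rfl, h⟩

/-! ### Auxiliary: the characteristic function -/

open Classical in
noncomputable def chiFn (L : Language Bool) (x : List Bool) : ℕ → Bool :=
  fun i => if x ++ natToStr i ∈ L then true else false

theorem chiPrefix_eq (L : Language Bool) (x : List Bool) (n : ℕ) :
    chiPrefix L x n = (List.range n).map (chiFn L x) := rfl

theorem chiFn_true_iff (L : Language Bool) (x : List Bool) (i : ℕ) :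
    chiFn L x i = true ↔ x ++ natToStr i ∈ L := by
  by_cases h : x ++ natToStr i ∈ L <;> simp [chiFn, h]

theorem range_chiFn_finite {φ : List Bool → List Bool → Part (List Bool)}
    (hφ : IsUniversal φ) {L : Language Bool} {c : ℕ}
    (hc : ∀ (x : List Bool) (n : ℕ), kolC φ (chiPrefix L x n) (natToStr n) ≤ c) :
    (Set.range (chiFn L)).Finite := by
  classical
  by_contra hinf
  obtain ⟨t, hts, htc⟩ := (Set.Infinite.exists_subset_card_eq hinf
    (((List.finite_length_le Bool c).toFinset).card + 1))
  obtain ⟨xf, hxf_spec⟩ : ∃ xf : (ℕ → Bool) → List Bool, ∀ f ∈ t, chiFn L (xf f) = f := by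
    refine ⟨fun f => if h : f ∈ Set.range (chiFn L) then h.choose else [], fun f hf => ?_⟩
    have h : f ∈ Set.range (chiFn L) := hts hf
    simp only [dif_pos h]
    exact h.choose_spec
  obtain ⟨N, hsep⟩ : ∃ N : ℕ, ∀ f ∈ t, ∀ g ∈ t, f ≠ g → ∃ i < N, f i ≠ g i := by
    refine ⟨(t.sup fun f => t.sup fun g =>
      if h : ∃ i, f i ≠ g i then Nat.find h else 0) + 1, fun f hf g hg hfg => ?_⟩
    have h : ∃ i, f i ≠ g i := Function.ne_iff.mp hfg
    refine ⟨Nat.find h, ?_, Nat.find_spec h⟩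
    have h1 : (if h : ∃ i, f i ≠ g i then Nat.find h else 0) ≤
        t.sup fun g => if h : ∃ i, f i ≠ g i then Nat.find h else 0 :=
      Finset.le_sup (f := fun g => if h : ∃ i, f i ≠ g i then Nat.find h else 0) hg
    have h2 : (t.sup fun g => if h : ∃ i, f i ≠ g i then Nat.find h else 0) ≤
        t.sup fun f => t.sup fun g => if h : ∃ i, f i ≠ g i then Nat.find h else 0 :=
      Finset.le_sup
        (f := fun f => t.sup fun g => if h : ∃ i, f i ≠ g i then Nat.find h else 0) hf
    simp only [dif_pos h] at h1
    exact Nat.lt_succ_of_le (h1.trans h2)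
  have hpre : ∀ f ∈ t, ∀ g ∈ t, f ≠ g →
      chiPrefix L (xf f) N ≠ chiPrefix L (xf g) N := by
    intro f hf g hg hfg heq
    obtain ⟨i, hiN, hne⟩ := hsep f hf g hg hfg
    rw [chiPrefix_eq, chiPrefix_eq, hxf_spec f hf, hxf_spec g hg] at heq
    apply hne
    have h1 := congrArg (fun l : List Bool => l.getD i false) heq
    simpa [List.getD_eq_getElem?_getD, List.getElem?_range, hiN] using h1
  obtain ⟨pf, hpf_spec⟩ : ∃ pf : (ℕ → Bool) → List Bool, ∀ f ∈ t,
      (pf f).length ≤ c ∧ chiPrefix L (xf f) N ∈ φ (pf f) (natToStr N) := by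
    refine ⟨fun f => if h : ∃ p : List Bool,
        p.length ≤ c ∧ chiPrefix L (xf f) N ∈ φ p (natToStr N) then h.choose else [],
      fun f hf => ?_⟩
    have h : ∃ p : List Bool, p.length ≤ c ∧ chiPrefix L (xf f) N ∈ φ p (natToStr N) :=
      kolC_witness hφ (hc (xf f) N)
    simp only [dif_pos h]
    exact h.choose_spec
  have hcard : t.card ≤ ((List.finite_length_le Bool c).toFinset).card := by
    refine Finset.card_le_card_of_injOn pf (fun f hf => ?_) (fun f hf g hg heq => ?_)
    · simp only [Finset.mem_coe, Set.Finite.mem_toFinset, Set.mem_setOf_eq]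
      exact (hpf_spec f hf).1
    · by_contra hfg
      have h2 := (hpf_spec g hg).2
      rw [← heq] at h2
      exact hpre f hf g hg hfg (Part.mem_unique (hpf_spec f hf).2 h2)
  omega

/-! ### Auxiliary: the quotient DFA -/

def lquot (L : Language Bool) (x : List Bool) : Language Bool := {y | x ++ y ∈ L}

theorem lquot_step (L : Language Bool) (x x' : List Bool) (b : Bool)
    (h : lquot L x = lquot L x') : lquot L (x ++ [b]) = lquot L (x' ++ [b]) := by
  ext y
  have h1 : ([b] ++ y) ∈ lquot L x ↔ ([b] ++ y) ∈ lquot L x' := by rw [h]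
  show x ++ [b] ++ y ∈ L ↔ x' ++ [b] ++ y ∈ L
  rw [List.append_assoc, List.append_assoc]
  exact h1

noncomputable def quotDFA (L : Language Bool) : DFA Bool (Set.range (lquot L)) where
  step s b := ⟨lquot L (s.2.choose ++ [b]), Set.mem_range_self _⟩
  start := ⟨lquot L [], Set.mem_range_self _⟩
  accept := {s | [] ∈ s.1}

theorem quotDFA_eval (L : Language Bool) (x : List Bool) :
    (quotDFA L).eval x = ⟨lquot L x, Set.mem_range_self x⟩ := by
  induction x using List.reverseRecOn with
  | nil => rfl
  | append_singleton x b ih =>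
    rw [DFA.eval, DFA.evalFrom_append_singleton, ← DFA.eval, ih]
    apply Subtype.ext
    show lquot L ((Set.mem_range_self x).choose ++ [b]) = lquot L (x ++ [b])
    exact lquot_step L _ _ b (Set.mem_range_self x).choose_spec

theorem quotDFA_accepts (L : Language Bool) : (quotDFA L).accepts = L := by
  ext x
  rw [DFA.mem_accepts, quotDFA_eval]
  show x ++ [] ∈ L ↔ x ∈ L
  rw [List.append_nil]

/-! ### Main theorem -/

/-- Regular KC-Characterization: `L` is regular iff there is a constant `c` such that
`C(χ(x)_{1:n} | n) ≤ c` for all `x` and `n`. -/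
theorem kc_characterization_regular (φ : List Bool → List Bool → Part (List Bool))
    (hφ : IsUniversal φ) (L : Language Bool) :
    L.IsRegular ↔ ∃ c : ℕ, ∀ (x : List Bool) (n : ℕ),
      kolC φ (chiPrefix L x n) (natToStr n) ≤ c := by
  constructor
  · rintro ⟨σ, _, M, hM⟩
    obtain ⟨c0, hc0⟩ := hφ.2 (fun p y => Part.some (dfaF M p y))
      (Computable₂.partrec₂ (primrec_dfaF M).to_comp)
    refine ⟨Fintype.card σ + c0, fun x n => ?_⟩
    have hmem : chiPrefix L x n ∈ (fun p y => Part.some (dfaF M p y))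
        (natToStr ((Fintype.equivFin σ) (M.eval x)).val) (natToStr n) := by
      show chiPrefix L x n ∈ Part.some (dfaF M (natToStr ((Fintype.equivFin σ) (M.eval x)).val)
        (natToStr n))
      rw [dfaF_correct M L hM]
      exact Part.mem_some _
    obtain ⟨q, hq, hqlen⟩ := hc0 _ (natToStr n) _ hmem
    have hp : (natToStr ((Fintype.equivFin σ) (M.eval x)).val).length ≤
        ((Fintype.equivFin σ) (M.eval x)).val := natToStr_length_le _
    refine le_trans (kolC_le hq) (le_trans hqlen ?_)
    have h2 := ((Fintype.equivFin σ) (M.eval x)).isLt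
    omega
  · rintro ⟨c, hc⟩
    classical
    have hchi : (Set.range (chiFn L)).Finite := range_chiFn_finite hφ hc
    -- Step 2: hence finitely many left quotients.
    have hQG : ∀ x, ({y : List Bool | chiFn L x (strToNat y) = true} : Language Bool) =
        lquot L x := by
      intro x
      ext y
      simp only [Set.mem_setOf_eq, lquot]
      rw [chiFn_true_iff, natToStr_strToNat]
    have hQfin : (Set.range (lquot L)).Finite := by
      refine Set.Finite.subset (Set.Finite.image
        (fun f : ℕ → Bool => ({y : List Bool | f (strToNat y) = true} : Language Bool)) hchi) ?_
      rintro _ ⟨x, rfl⟩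
      exact ⟨chiFn L x, Set.mem_range_self x, hQG x⟩
    haveI : Fintype (Set.range (lquot L)) := hQfin.fintype
    exact ⟨Set.range (lquot L), inferInstance, quotDFA L, quotDFA_accepts L⟩
end

section
/- A language L ⊆ Σ* is recursive (decidable) if and only if there exists a constant c_L such that for all n, C(λ_{1:n} | n) ≤ c_L, where λ is the characteristic sequence of L with respect to a fixed computable enumeration v₁, v₂, … of Σ*. -/
open Classical in
/-- The length-`n` prefix `λ_{1:n}` of the characteristic sequence of `L`. -/
noncomputable def lamPrefix (L : Language Bool) (n : ℕ) : List Bool :=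
  (List.range n).map fun i => if natToStr i ∈ L then true else false



namespace KC

/-! ### The bijection between ℕ and binary strings -/

def g (a : ℕ) (b : Bool) : ℕ := 2 * a + cond b 1 0

def val (s : List Bool) : ℕ := s.foldl g 1

def strToNat (s : List Bool) : ℕ := val s - 1

def u (m : ℕ) : List Bool := (Nat.bits m).reverse.tail

lemma bits_cons {m : ℕ} (h : m ≠ 0) : Nat.bits m = m.bodd :: Nat.bits (m / 2) := by
  conv_lhs => rw [← Nat.bit_bodd_div2 m]
  rw [Nat.bits_append_bit, Nat.div2_val]
  intro h0
  by_contra hb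
  apply h
  rw [Bool.not_eq_true] at hb
  have := Nat.bit_bodd_div2 m
  rw [hb, h0] at this
  simpa [Nat.bit] using this.symm

lemma bits_ne_nil {m : ℕ} (h : m ≠ 0) : Nat.bits m ≠ [] := by
  rw [bits_cons h]; simp

lemma u_one : u 1 = [] := by simp [u, Nat.one_bits]

lemma u_rec {m : ℕ} (h : 2 ≤ m) : u m = u (m / 2) ++ [m.bodd] := by
  have h2 : m / 2 ≠ 0 := by omega
  rw [u, bits_cons (by omega : m ≠ 0), List.reverse_cons,
    List.tail_append_of_ne_nil (by simp [bits_ne_nil h2]), u]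

lemma val_append (s : List Bool) (b : Bool) : val (s ++ [b]) = g (val s) b := by
  simp [val, List.foldl_append]

lemma foldl_ge (s : List Bool) (a : ℕ) : a ≤ s.foldl g a := by
  induction s generalizing a with
  | nil => simp
  | cons b s ih =>
    refine le_trans ?_ (ih (g a b))
    cases b <;> simp [g] <;> omega

lemma one_le_val (s : List Bool) : 1 ≤ val s := foldl_ge s 1

lemma val_u : ∀ m : ℕ, m ≠ 0 → val (u m) = m := by
  intro m
  induction m using Nat.strong_induction_on with
  | _ m ih =>
    intro hm
    rcases lt_or_ge m 2 with h2 | h2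
    · interval_cases m
      · exact absurd rfl hm
      · rw [u_one]; rfl
    · have hlt : m / 2 < m := by omega
      have hne : m / 2 ≠ 0 := by omega
      rw [u_rec h2, val_append, ih (m / 2) hlt hne]
      have hmod := Nat.mod_two_of_bodd m
      have hdm := Nat.div_add_mod m 2
      cases hb : m.bodd <;> rw [hb] at hmod <;> simp at hmod <;> simp [g] <;> omega

lemma bodd_of_mod (X : ℕ) (b : Bool) (h : X % 2 = cond b 1 0) : X.bodd = b := by
  have hmod := Nat.mod_two_of_bodd X
  cases b <;> cases hb : X.bodd <;> simp_all

lemma u_val (s : List Bool) : u (val s) = s := by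
  induction s using List.reverseRecOn with
  | nil => simpa [val] using u_one
  | append_singleton s b ih =>
    have hv := one_le_val s
    rw [val_append]
    have h2 : 2 ≤ g (val s) b := by cases b <;> simp [g] <;> omega
    rw [u_rec h2]
    have hdiv : g (val s) b / 2 = val s := by cases b <;> simp [g] <;> omega
    have hbodd : (g (val s) b).bodd = b :=
      bodd_of_mod _ b (by cases b <;> simp [g] <;> omega)
    rw [hdiv, hbodd, ih]

lemma natToStr_eq_u (n : ℕ) : natToStr n = u (n + 1) := rfl

lemma strToNat_natToStr (n : ℕ) : strToNat (natToStr n) = n := by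
  rw [natToStr_eq_u, strToNat, val_u (n + 1) (Nat.succ_ne_zero n)]
  omega

lemma natToStr_strToNat (s : List Bool) : natToStr (strToNat s) = s := by
  have h1 := one_le_val s
  have : strToNat s + 1 = val s := by rw [strToNat]; omega
  rw [natToStr_eq_u, this, u_val]

lemma foldl_lt (s : List Bool) (a : ℕ) : s.foldl g a < (a + 1) * 2 ^ s.length := by
  induction s generalizing a with
  | nil => simpa using Nat.lt_succ_self a
  | cons b s ih =>
    have h1 : (List.foldl g (g a b) s) < (g a b + 1) * 2 ^ s.length := ih (g a b)
    have h2 : (g a b + 1) * 2 ^ s.length ≤ (a + 1) * 2 ^ (b :: s).length := by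
      have : g a b + 1 ≤ 2 * (a + 1) := by cases b <;> simp [g] <;> omega
      calc (g a b + 1) * 2 ^ s.length ≤ 2 * (a + 1) * 2 ^ s.length :=
            Nat.mul_le_mul_right _ this
        _ = (a + 1) * 2 ^ (s.length + 1) := by ring
        _ = (a + 1) * 2 ^ (b :: s).length := by simp
    exact lt_of_lt_of_le h1 h2

lemma val_lt (s : List Bool) : val s < 2 ^ (s.length + 1) := by
  have := foldl_lt s 1
  calc val s < (1 + 1) * 2 ^ s.length := this
    _ = 2 ^ (s.length + 1) := by ring

lemma strToNat_lt {s : List Bool} {c : ℕ} (h : s.length ≤ c) : strToNat s < 2 ^ (c + 1) := by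
  have h1 := val_lt s
  have h2 : (2:ℕ) ^ (s.length + 1) ≤ 2 ^ (c + 1) := Nat.pow_le_pow_right (by norm_num) (by omega)
  rw [strToNat]; omega

/-! ### Primitive recursiveness of the bijection -/

def stepf : ℕ × List Bool → ℕ × List Bool := fun p =>
  if 1 < p.1 then (p.1 / 2, decide (p.1 % 2 = 1) :: p.2) else p

lemma stepf_one (acc : List Bool) : stepf (1, acc) = (1, acc) := by simp [stepf]

lemma iterate_one (j : ℕ) (acc : List Bool) : stepf^[j] (1, acc) = (1, acc) := by
  induction j with
  | zero => rfl
  | succ j ih => rw [Function.iterate_succ_apply, stepf_one, ih]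

lemma decide_mod_eq_bodd (m : ℕ) : decide (m % 2 = 1) = m.bodd := by
  have hmod := Nat.mod_two_of_bodd m
  cases hb : m.bodd <;> rw [hb] at hmod <;> simp [hmod]

lemma stepf_iterate : ∀ m : ℕ, m ≠ 0 → ∀ j acc, m ≤ j + 1 →
    stepf^[j] (m, acc) = (1, u m ++ acc) := by
  intro m
  induction m using Nat.strong_induction_on with
  | _ m ih =>
    intro hm j acc hj
    rcases lt_or_ge m 2 with h2 | h2
    · have : m = 1 := by omega
      subst this
      rw [iterate_one, u_one]; rfl
    · obtain ⟨j', rfl⟩ : ∃ j', j = j' + 1 := ⟨j - 1, by omega⟩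
      rw [Function.iterate_succ_apply]
      have hst : stepf (m, acc) = (m / 2, m.bodd :: acc) := by
        simp [stepf, if_pos (by omega : 1 < m), decide_mod_eq_bodd]
      rw [hst, ih (m / 2) (by omega) (by omega) j' (m.bodd :: acc) (by omega)]
      rw [u_rec h2]
      simp

lemma natToStr_eq_iterate (n : ℕ) : natToStr n = (stepf^[n + 1] (n + 1, [])).2 := by
  rw [stepf_iterate (n + 1) (Nat.succ_ne_zero n) (n + 1) [] (by omega)]
  simp [natToStr_eq_u]

lemma primrec_stepf : Primrec stepf := by
  refine Primrec.ite (Primrec.nat_lt.comp (Primrec.const 1) Primrec.fst) ?_ Primrec.id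
  refine Primrec.pair (Primrec.nat_div.comp Primrec.fst (Primrec.const 2)) ?_
  exact Primrec.list_cons.comp
    (Primrec.eq.comp (Primrec.nat_mod.comp Primrec.fst (Primrec.const 2)) (Primrec.const 1)).decide
    Primrec.snd

lemma primrec_natToStr : Primrec natToStr := by
  have h : Primrec fun n : ℕ => (stepf^[n + 1] (n + 1, [])) :=
    Primrec.nat_iterate Primrec.succ (Primrec.pair Primrec.succ (Primrec.const []))
      ((primrec_stepf.comp Primrec.snd).to₂)
  exact (Primrec.snd.comp h).of_eq fun n => (natToStr_eq_iterate n).symm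

lemma primrec_val : Primrec val := by
  have : Primrec₂ g :=
    (Primrec.nat_add.comp (Primrec.nat_mul.comp (Primrec.const 2) Primrec.fst)
      (Primrec.cond Primrec.snd (Primrec.const 1) (Primrec.const 0))).to₂
  exact Primrec.list_foldl Primrec.id (Primrec.const 1)
    ((this.comp (Primrec.fst.comp Primrec.snd) (Primrec.snd.comp Primrec.snd)).to₂)
    |>.of_eq fun s => rfl

lemma primrec_strToNat : Primrec strToNat :=
  Primrec.nat_sub.comp primrec_val (Primrec.const 1)

end KC


namespace KC

/-! ### takeD -/

def takeD (ℓ : ℕ) (x : List Bool) : List Bool := (List.range ℓ).map fun j => x.getD j false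

lemma takeD_length (ℓ : ℕ) (x : List Bool) : (takeD ℓ x).length = ℓ := by simp [takeD]

lemma takeD_eq_take {ℓ : ℕ} {x : List Bool} (h : ℓ ≤ x.length) : takeD ℓ x = x.take ℓ := by
  apply List.ext_getElem
  · simp [takeD]; omega
  · intro i h1 h2
    have h1' : i < ℓ := by simpa [takeD] using h1
    simp only [takeD, List.getElem_map, List.getElem_range, List.getElem_take]
    rw [List.getD_eq_getElem _ _ (lt_of_lt_of_le h1' h)]

lemma takeD_getD {i ℓ : ℕ} (x : List Bool) (h : i < ℓ) :
    (takeD ℓ x).getD i false = x.getD i false := by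
  rw [List.getD_eq_getElem _ _ (by simp [takeD]; omega)]
  simp [takeD]

lemma take_of_prefix {u v : List Bool} {j : ℕ} (h : u <+: v) (hj : j ≤ u.length) :
    v.take j = u.take j := by
  obtain ⟨r, rfl⟩ := h
  rw [List.take_append, Nat.sub_eq_zero_of_le hj]
  simp

lemma prefix_iff_takeD {σv x : List Bool} {km : ℕ} (hσ : σv.length = km) (hx : km ≤ x.length) :
    (takeD km x = σv ↔ σv <+: x) := by
  rw [takeD_eq_take hx]
  constructor
  · rintro rfl; exact List.take_prefix _ _
  · intro h
    have h2 := take_of_prefix h (le_of_eq hσ.symm)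
    rw [h2, ← hσ, List.take_length]

/-! ### lamPrefix -/

open Classical in
noncomputable def ch (L : Language Bool) (i : ℕ) : Bool := decide (natToStr i ∈ L)

variable {L : Language Bool}

lemma lamPrefix_eq_map (L : Language Bool) (n : ℕ) :
    lamPrefix L n = (List.range n).map (ch L) := by
  unfold lamPrefix
  refine List.map_congr_left fun i _ => ?_
  by_cases h : natToStr i ∈ L <;> simp [ch, h]

lemma lamPrefix_length (L : Language Bool) (n : ℕ) : (lamPrefix L n).length = n := by
  simp [lamPrefix_eq_map]

lemma lamPrefix_take {k n : ℕ} (h : k ≤ n) : (lamPrefix L n).take k = lamPrefix L k := by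
  simp only [lamPrefix_eq_map, ← List.map_take, List.take_range, Nat.min_eq_left h]

lemma lamPrefix_prefix {k n : ℕ} (h : k ≤ n) : lamPrefix L k <+: lamPrefix L n := by
  rw [← lamPrefix_take h]; exact List.take_prefix _ _

lemma lamPrefix_getD {i n : ℕ} (h : i < n) : (lamPrefix L n).getD i false = ch L i := by
  rw [lamPrefix_eq_map, List.getD_eq_getElem _ _ (by simpa using h)]
  simp

lemma takeD_lamPrefix {ℓ n : ℕ} (h : ℓ ≤ n) : takeD ℓ (lamPrefix L n) = lamPrefix L ℓ := by
  rw [takeD_eq_take (by rw [lamPrefix_length]; exact h), lamPrefix_take h]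

lemma takeD_of_prefix {k₀ ℓ : ℕ} {y : List Bool} (h : lamPrefix L k₀ <+: y) (hℓ : ℓ ≤ k₀) :
    takeD ℓ y = lamPrefix L ℓ := by
  have hy : k₀ ≤ y.length := by
    have := h.length_le; rwa [lamPrefix_length] at this
  rw [takeD_eq_take (le_trans hℓ hy),
    take_of_prefix h (by rw [lamPrefix_length]; exact hℓ), lamPrefix_take hℓ]

/-! ### list utilities and their primitive recursiveness -/

lemma foldr_filter (p : List Bool → Bool) (l : List (List Bool)) :
    l.foldr (fun b s => bif p b then b :: s else s) [] = l.filter p := by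
  induction l with
  | nil => rfl
  | cons b l ih =>
    simp only [List.foldr_cons, ih, List.filter_cons]
    cases hb : p b <;> simp

lemma foldr_find? (p : List Bool → Bool) (l : List (List Bool)) :
    l.foldr (fun b s => bif p b then some b else s) none = l.find? p := by
  induction l with
  | nil => rfl
  | cons b l ih =>
    simp only [List.foldr_cons, ih, List.find?_cons]
    cases hb : p b <;> simp

lemma foldr_reduceOption (l : List (Option (List Bool))) :
    l.foldr (fun o s => o.elim s (· :: s)) [] = l.reduceOption := by
  induction l with
  | nil => rfl
  | cons o l ih => cases o <;> simp [List.reduceOption_cons_of_some, ih]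

def belem (a : List Bool) (l : List (List Bool)) : Bool :=
  l.foldr (fun b r => (decide (b = a)) || r) false

lemma belem_iff {a : List Bool} {l : List (List Bool)} : belem a l = true ↔ a ∈ l := by
  induction l with
  | nil => simp [belem]
  | cons b l ih =>
    simp only [belem, List.foldr_cons, Bool.or_eq_true, decide_eq_true_eq, List.mem_cons] at ih ⊢
    rw [ih, eq_comm]

lemma foldr_dedup (l : List (List Bool)) :
    l.foldr (fun b r => bif belem b r then r else b :: r) [] = l.dedup := by
  induction l with
  | nil => rfl
  | cons b l ih =>
    simp only [List.foldr_cons, ih]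
    by_cases h : b ∈ l.dedup
    · rw [List.dedup_cons_of_mem' h]
      have : belem b l.dedup = true := belem_iff.2 h
      simp [this]
    · rw [List.dedup_cons_of_notMem' h]
      have : belem b l.dedup = false := by
        rw [← Bool.not_eq_true, belem_iff]; exact h
      simp [this]

lemma primrec_belem : Primrec₂ belem := by
  have hstep : Primrec₂ fun (a : List Bool × List (List Bool))
      (p : List Bool × Bool) => ((decide (p.1 = a.1)) || p.2) :=
    ((Primrec.dom_bool₂ (· || ·)).comp
      (Primrec.eq.comp (Primrec.fst.comp Primrec.snd) (Primrec.fst.comp Primrec.fst)).decide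
      (Primrec.snd.comp Primrec.snd)).to₂
  exact (Primrec.list_foldr Primrec.snd (Primrec.const false) hstep).to₂

lemma primrec_dedup : Primrec (fun l : List (List Bool) => l.dedup) := by
  have hstep : Primrec₂ fun (_ : List (List Bool))
      (p : List Bool × List (List Bool)) => bif belem p.1 p.2 then p.2 else p.1 :: p.2 :=
    (Primrec.cond (primrec_belem.comp (Primrec.fst.comp Primrec.snd) (Primrec.snd.comp Primrec.snd))
      (Primrec.snd.comp Primrec.snd)
      (Primrec.list_cons.comp (Primrec.fst.comp Primrec.snd) (Primrec.snd.comp Primrec.snd))).to₂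
  exact (Primrec.list_foldr Primrec.id (Primrec.const []) hstep).of_eq fun l => foldr_dedup l

lemma primrec_reduceOption : Primrec (fun l : List (Option (List Bool)) => l.reduceOption) := by
  have hstep : Primrec fun (q : List (Option (List Bool)) ×
      (Option (List Bool) × List (List Bool))) => q.2.1.elim q.2.2 (· :: q.2.2) :=
    Primrec.of_eq
      (Primrec.option_casesOn (Primrec.fst.comp Primrec.snd) (Primrec.snd.comp Primrec.snd)
        ((Primrec.list_cons.comp Primrec.snd
          ((Primrec.snd.comp Primrec.snd).comp Primrec.fst)).to₂))
      (fun q => by rcases q with ⟨_, o, s⟩; cases o <;> rfl)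
  exact (Primrec.list_foldr Primrec.id (Primrec.const []) hstep.to₂).of_eq fun l =>
    foldr_reduceOption l

lemma primrec_filter {α : Type} [Primcodable α] {f : α → List (List Bool)}
    {p : α → List Bool → Bool} (hf : Primrec f) (hp : Primrec₂ p) :
    Primrec fun a => (f a).filter (p a) := by
  have hstep : Primrec₂ fun (a : α) (q : List Bool × List (List Bool)) =>
      bif p a q.1 then q.1 :: q.2 else q.2 :=
    (Primrec.cond (hp.comp Primrec.fst (Primrec.fst.comp Primrec.snd))
      (Primrec.list_cons.comp (Primrec.fst.comp Primrec.snd) (Primrec.snd.comp Primrec.snd))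
      (Primrec.snd.comp Primrec.snd)).to₂
  exact (Primrec.list_foldr hf (Primrec.const []) hstep).of_eq fun a => foldr_filter (p a) (f a)

lemma primrec_find? {α : Type} [Primcodable α] {f : α → List (List Bool)}
    {p : α → List Bool → Bool} (hf : Primrec f) (hp : Primrec₂ p) :
    Primrec fun a => (f a).find? (p a) := by
  have hstep : Primrec₂ fun (a : α) (q : List Bool × Option (List Bool)) =>
      bif p a q.1 then some q.1 else q.2 :=
    (Primrec.cond (hp.comp Primrec.fst (Primrec.fst.comp Primrec.snd))
      (Primrec.option_some.comp (Primrec.fst.comp Primrec.snd))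
      (Primrec.snd.comp Primrec.snd)).to₂
  exact (Primrec.list_foldr hf (Primrec.const none) hstep).of_eq fun a => foldr_find? (p a) (f a)

lemma primrec_takeD : Primrec₂ takeD :=
  (Primrec.list_map (Primrec.list_range.comp Primrec.fst)
    (((Primrec.list_getD false).comp (Primrec.snd.comp Primrec.fst) Primrec.snd).to₂)).to₂

/-! ### cardinality helpers -/

lemma length_le_ncard {l : List (List Bool)} (hl : l.Nodup) {s : Set (List Bool)}
    (hs : s.Finite) (h : ∀ x ∈ l, x ∈ s) : l.length ≤ s.ncard := by
  rw [← List.toFinset_card_of_nodup hl, ← Set.ncard_coe_finset]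
  exact Set.ncard_le_ncard (fun x hx => h x (List.mem_toFinset.1 hx)) hs

lemma ncard_le_length {s : Set (List Bool)} {l : List (List Bool)} (hl : l.Nodup)
    (h : ∀ x ∈ s, x ∈ l) : s.ncard ≤ l.length := by
  rw [← List.toFinset_card_of_nodup hl, ← Set.ncard_coe_finset]
  exact Set.ncard_le_ncard (fun x hx => List.mem_toFinset.2 (h x hx)) (Finset.finite_toSet _)

lemma length_le_length {l l' : List (List Bool)} (hl : l.Nodup) (hl' : l'.Nodup)
    (h : ∀ x ∈ l, x ∈ l') : l.length ≤ l'.length := by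
  rw [← List.toFinset_card_of_nodup hl, ← List.toFinset_card_of_nodup hl']
  exact Finset.card_le_card fun x hx => List.mem_toFinset.2 (h x (List.mem_toFinset.1 hx))

end KC

namespace KC

open Nat.Partrec (Code)
open Nat.Partrec.Code

/-! ### The time-bounded evaluator and the search machine -/

def EvalT (cod : Code) (t : ℕ) (p y : List Bool) : Option (List Bool) :=
  (evaln t cod (Encodable.encode ((p, y) : List Bool × List Bool))).bind
    fun e => (Encodable.decode e : Option (List Bool))

def candL (cod : Code) (Ps : List (List Bool)) (σv : List Bool) (km : ℕ) (n t : ℕ) :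
    List (List Bool) :=
  (((Ps.map fun p => EvalT cod t p (natToStr n)).reduceOption).filter
    fun x => decide (x.length = n) && decide (takeD km x = σv)).dedup

def goodCnt (cod : Code) (Ps : List (List Bool)) (σv : List Bool) (km : ℕ)
    (i : ℕ) (x : List Bool) (t : ℕ) : ℕ :=
  ((candL cod Ps σv km x.length t).filter
    fun y => decide (takeD (i + 1) y = takeD (i + 1) x)).length

def allCand (cod : Code) (Ps : List (List Bool)) (σv : List Bool) (km NN : ℕ)
    (i t : ℕ) : List (List Bool) :=
  (List.range (t + 1)).flatMap fun n =>
    bif decide (NN ≤ n) && decide (i + 1 + km ≤ n) then candL cod Ps σv km n t else []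

def HH (cod : Code) (Ps : List (List Bool)) (σv : List Bool) (km mm NN : ℕ)
    (i t : ℕ) : Option Bool :=
  ((allCand cod Ps σv km NN i t).find?
    fun x => decide (mm ≤ goodCnt cod Ps σv km i x t)).map fun x => x.getD i false

section PrimrecMachine

variable (cod : Code) (Ps : List (List Bool)) (σv : List Bool) (km mm NN : ℕ)

lemma primrec_EvalT : Primrec₂ fun (t : ℕ) (py : List Bool × List Bool) =>
    EvalT cod t py.1 py.2 := by
  have h1 : Primrec fun (a : ℕ × (List Bool × List Bool)) =>
      evaln a.1 cod (Encodable.encode a.2) :=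
    primrec_evaln.comp (Primrec.pair (Primrec.pair Primrec.fst (Primrec.const cod))
      (Primrec.encode.comp Primrec.snd))
  exact (Primrec.option_bind h1 ((Primrec.decode.comp Primrec.snd).to₂)).to₂

lemma primrec_candL : Primrec₂ (candL cod Ps σv km) := by
  have hmap : Primrec fun (a : ℕ × ℕ) => Ps.map fun p => EvalT cod a.2 p (natToStr a.1) :=
    Primrec.list_map (Primrec.const Ps)
      (((primrec_EvalT cod).comp (Primrec.snd.comp Primrec.fst)
        (Primrec.pair Primrec.snd (primrec_natToStr.comp (Primrec.fst.comp Primrec.fst)))).to₂)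
  have hred : Primrec fun (a : ℕ × ℕ) =>
      (Ps.map fun p => EvalT cod a.2 p (natToStr a.1)).reduceOption :=
    primrec_reduceOption.comp hmap
  have hpred : Primrec₂ fun (a : ℕ × ℕ) (x : List Bool) =>
      (decide (x.length = a.1) && decide (takeD km x = σv)) :=
    ((Primrec.dom_bool₂ (· && ·)).comp
      (Primrec.eq.comp (Primrec.list_length.comp Primrec.snd) (Primrec.fst.comp Primrec.fst)).decide
      (Primrec.eq.comp (primrec_takeD.comp (Primrec.const km) Primrec.snd)
        (Primrec.const σv)).decide).to₂
  have hfil := primrec_filter hred hpred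
  exact (primrec_dedup.comp hfil).to₂

lemma primrec_goodCnt : Primrec₂ fun (ix : ℕ × List Bool) (t : ℕ) =>
    goodCnt cod Ps σv km ix.1 ix.2 t := by
  have hcl : Primrec fun (a : (ℕ × List Bool) × ℕ) =>
      candL cod Ps σv km a.1.2.length a.2 :=
    (primrec_candL cod Ps σv km).comp
      (Primrec.list_length.comp (Primrec.snd.comp Primrec.fst)) Primrec.snd
  have hpred : Primrec₂ fun (a : (ℕ × List Bool) × ℕ) (y : List Bool) =>
      decide (takeD (a.1.1 + 1) y = takeD (a.1.1 + 1) a.1.2) := by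
    have hl : Primrec fun (a : (ℕ × List Bool) × ℕ) => a.1.1 + 1 :=
      Primrec.succ.comp (Primrec.fst.comp Primrec.fst)
    exact (Primrec.eq.comp (primrec_takeD.comp (hl.comp Primrec.fst) Primrec.snd)
      (primrec_takeD.comp (hl.comp Primrec.fst)
        ((Primrec.snd.comp Primrec.fst).comp Primrec.fst))).decide.to₂
  exact (Primrec.list_length.comp (primrec_filter hcl hpred)).to₂

lemma primrec_allCand : Primrec₂ (allCand cod Ps σv km NN) := by
  have hrange : Primrec fun (a : ℕ × ℕ) => List.range (a.2 + 1) :=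
    Primrec.list_range.comp (Primrec.succ.comp Primrec.snd)
  have hg : Primrec₂ fun (a : ℕ × ℕ) (n : ℕ) =>
      bif decide (NN ≤ n) && decide (a.1 + 1 + km ≤ n) then candL cod Ps σv km n a.2 else [] := by
    have hcond : Primrec fun (p : (ℕ × ℕ) × ℕ) =>
        (decide (NN ≤ p.2) && decide (p.1.1 + 1 + km ≤ p.2)) :=
      (Primrec.dom_bool₂ (· && ·)).comp
        (Primrec.nat_le.comp (Primrec.const NN) Primrec.snd).decide
        (Primrec.nat_le.comp
          (Primrec.nat_add.comp (Primrec.succ.comp (Primrec.fst.comp Primrec.fst))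
            (Primrec.const km)) Primrec.snd).decide
    exact (Primrec.cond hcond
      ((primrec_candL cod Ps σv km).comp Primrec.snd (Primrec.snd.comp Primrec.fst))
      (Primrec.const [])).to₂
  exact (Primrec.list_flatMap hrange hg).to₂

lemma primrec_HH : Primrec₂ (HH cod Ps σv km mm NN) := by
  have hfind : Primrec fun (a : ℕ × ℕ) =>
      (allCand cod Ps σv km NN a.1 a.2).find?
        fun x => decide (mm ≤ goodCnt cod Ps σv km a.1 x a.2) := by
    refine primrec_find? ((primrec_allCand cod Ps σv km NN).comp Primrec.fst Primrec.snd) ?_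
    exact (Primrec.nat_le.comp (Primrec.const mm)
      ((primrec_goodCnt cod Ps σv km).comp
        (Primrec.pair (Primrec.fst.comp Primrec.fst) Primrec.snd)
        (Primrec.snd.comp Primrec.fst))).decide.to₂
  exact (Primrec.option_map hfind
    (((Primrec.list_getD false).comp Primrec.snd (Primrec.fst.comp Primrec.fst)).to₂)).to₂

end PrimrecMachine

end KC

namespace KC

open Nat.Partrec (Code)
open Nat.Partrec.Code

section Semantics

variable {φ : List Bool → List Bool → Part (List Bool)} {cod : Code}

lemma evalT_mono {t t' : ℕ} {p y x : List Bool} (h : t ≤ t')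
    (hx : EvalT cod t p y = some x) : EvalT cod t' p y = some x := by
  rcases Option.bind_eq_some_iff.1 hx with ⟨e, he, hd⟩
  have he' := evaln_mono h (Option.mem_def.2 he)
  unfold EvalT
  rw [Option.mem_def.1 he']
  exact hd

lemma evalT_complete
    (hcod : ∀ p y : List Bool,
      eval cod (Encodable.encode ((p, y) : List Bool × List Bool)) =
        (φ p y).map Encodable.encode)
    (p y x : List Bool) : x ∈ φ p y ↔ ∃ t, EvalT cod t p y = some x := by
  constructor
  · intro hx
    have hmem : Encodable.encode x ∈
        eval cod (Encodable.encode ((p, y) : List Bool × List Bool)) := by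
      rw [hcod]; exact Part.mem_map _ hx
    obtain ⟨t, ht⟩ := evaln_complete.1 hmem
    refine ⟨t, ?_⟩
    unfold EvalT
    rw [Option.mem_def.1 ht]
    simp [Encodable.encodek]
  · rintro ⟨t, ht⟩
    rcases Option.bind_eq_some_iff.1 ht with ⟨e, he, hd⟩
    have hmem : e ∈ eval cod (Encodable.encode ((p, y) : List Bool × List Bool)) :=
      evaln_sound (Option.mem_def.2 he)
    rw [hcod] at hmem
    obtain ⟨x', hx', hex⟩ := (Part.mem_map_iff _).1 hmem
    rw [← hex, Encodable.encodek] at hd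
    injection hd with hd'
    rwa [← hd']

variable {Ps : List (List Bool)} {σv : List Bool} {km : ℕ}

lemma mem_candL_iff (hσ : σv.length = km) {n t : ℕ} (hn : km ≤ n) {x : List Bool} :
    x ∈ candL cod Ps σv km n t ↔
      x.length = n ∧ σv <+: x ∧ ∃ p ∈ Ps, EvalT cod t p (natToStr n) = some x := by
  unfold candL
  rw [List.mem_dedup, List.mem_filter]
  simp only [List.reduceOption_mem_iff, List.mem_map, Bool.and_eq_true, decide_eq_true_eq]
  constructor
  · rintro ⟨⟨p, hp, hev⟩, hlen, htake⟩
    have hxlen : km ≤ x.length := by omega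
    exact ⟨hlen, (prefix_iff_takeD hσ hxlen).1 htake, ⟨p, hp, hev⟩⟩
  · rintro ⟨hlen, hpre, ⟨p, hp, hev⟩⟩
    have hxlen : km ≤ x.length := by omega
    exact ⟨⟨p, hp, hev⟩, hlen, (prefix_iff_takeD hσ hxlen).2 hpre⟩

lemma candL_nodup (n t : ℕ) : (candL cod Ps σv km n t).Nodup := List.nodup_dedup _

lemma candL_mono (hσ : σv.length = km) {n t t' : ℕ} (hn : km ≤ n) (h : t ≤ t')
    {x : List Bool} (hx : x ∈ candL cod Ps σv km n t) : x ∈ candL cod Ps σv km n t' := by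
  rw [mem_candL_iff hσ hn] at hx ⊢
  obtain ⟨h1, h2, p, hp, hev⟩ := hx
  exact ⟨h1, h2, p, hp, evalT_mono h hev⟩

end Semantics

/-! ### The candidate sets -/

def Cand (φ : List Bool → List Bool → Part (List Bool)) (Ps : List (List Bool)) (n : ℕ) :
    Set (List Bool) :=
  {x | x.length = n ∧ ∃ p ∈ Ps, x ∈ φ p (natToStr n)}

lemma cand_finite (φ : List Bool → List Bool → Part (List Bool)) (Ps : List (List Bool))
    (n : ℕ) : (Cand φ Ps n).Finite := by
  have hsub : Cand φ Ps n ⊆ ⋃ p ∈ (Ps.toFinset : Set (List Bool)),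
      {x | x ∈ φ p (natToStr n)} := by
    rintro x ⟨-, p, hp, hx⟩
    exact Set.mem_biUnion (by simpa using hp) hx
  refine Set.Finite.subset (Set.Finite.biUnion (Ps.toFinset.finite_toSet) fun p _ => ?_) hsub
  exact Set.Subsingleton.finite fun a ha b hb => Part.mem_unique ha hb

def cntS (φ : List Bool → List Bool → Part (List Bool)) (L : Language Bool)
    (Ps : List (List Bool)) (k n : ℕ) : Set (List Bool) :=
  Cand φ Ps n ∩ {x | lamPrefix L k <+: x}

noncomputable def cnt (φ : List Bool → List Bool → Part (List Bool)) (L : Language Bool)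
    (Ps : List (List Bool)) (k n : ℕ) : ℕ := (cntS φ L Ps k n).ncard

section Counting

variable {φ : List Bool → List Bool → Part (List Bool)} {L : Language Bool}
  {Ps : List (List Bool)}

lemma cntS_finite (k n : ℕ) : (cntS φ L Ps k n).Finite :=
  (cand_finite φ Ps n).inter_of_left _

lemma cnt_le (k n : ℕ) : cnt φ L Ps k n ≤ Ps.length := by
  classical
  have hmap : ∀ x ∈ cntS φ L Ps k n,
      (if h : ∃ p ∈ Ps, x ∈ φ p (natToStr n) then h.choose else []) ∈
        (Ps.toFinset : Set (List Bool)) := by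
    rintro x ⟨⟨-, hx⟩, -⟩
    rw [dif_pos hx]
    simpa using hx.choose_spec.1
  have hinj : Set.InjOn
      (fun x => if h : ∃ p ∈ Ps, x ∈ φ p (natToStr n) then h.choose else [])
      (cntS φ L Ps k n) := by
    rintro x ⟨⟨-, hx⟩, -⟩ y ⟨⟨-, hy⟩, -⟩ hxy
    simp only [dif_pos hx, dif_pos hy] at hxy
    have h1 := hx.choose_spec.2
    have h2 := hy.choose_spec.2
    rw [hxy] at h1
    exact Part.mem_unique h1 h2
  calc cnt φ L Ps k n ≤ (Ps.toFinset : Set (List Bool)).ncard :=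
        Set.ncard_le_ncard_of_injOn _ hmap hinj (Ps.toFinset.finite_toSet)
    _ = Ps.toFinset.card := Set.ncard_coe_finset _
    _ ≤ Ps.length := Ps.toFinset_card_le

lemma cnt_anti {k k' : ℕ} (h : k ≤ k') (n : ℕ) : cnt φ L Ps k' n ≤ cnt φ L Ps k n := by
  refine Set.ncard_le_ncard ?_ (cntS_finite k n)
  rintro x ⟨h1, h2⟩
  exact ⟨h1, (lamPrefix_prefix h).trans h2⟩

lemma mem_cntS {k n : ℕ} (hk : k ≤ n)
    (hmem : lamPrefix L n ∈ Cand φ Ps n) : lamPrefix L n ∈ cntS φ L Ps k n :=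
  ⟨hmem, lamPrefix_prefix hk⟩

lemma cnt_pos {k n : ℕ} (hk : k ≤ n) (hmem : lamPrefix L n ∈ Cand φ Ps n) :
    1 ≤ cnt φ L Ps k n :=
  (Set.ncard_pos (cntS_finite k n)).2 ⟨_, mem_cntS hk hmem⟩

end Counting

end KC

namespace KC

open Nat.Partrec (Code)
open Nat.Partrec.Code

lemma mem_allCand {cod : Code} {Ps : List (List Bool)} {σv : List Bool} {km NN i t : ℕ}
    {x : List Bool} (hx : x ∈ allCand cod Ps σv km NN i t) :
    ∃ n, n < t + 1 ∧ NN ≤ n ∧ i + 1 + km ≤ n ∧ x ∈ candL cod Ps σv km n t := by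
  unfold allCand at hx
  rw [List.mem_flatMap] at hx
  obtain ⟨n, hn, hxin⟩ := hx
  cases hb2 : (decide (NN ≤ n) && decide (i + 1 + km ≤ n))
  · rw [hb2] at hxin; simp at hxin
  · rw [hb2] at hxin
    simp only [cond_true] at hxin
    rw [Bool.and_eq_true, decide_eq_true_eq, decide_eq_true_eq] at hb2
    exact ⟨n, List.mem_range.1 hn, hb2.1, hb2.2, hxin⟩

lemma mem_allCand_intro {cod : Code} {Ps : List (List Bool)} {σv : List Bool} {km NN i t n : ℕ}
    {x : List Bool} (hn : n < t + 1) (h1 : NN ≤ n) (h2 : i + 1 + km ≤ n)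
    (hx : x ∈ candL cod Ps σv km n t) : x ∈ allCand cod Ps σv km NN i t := by
  unfold allCand
  rw [List.mem_flatMap]
  refine ⟨n, List.mem_range.2 hn, ?_⟩
  have hb : (decide (NN ≤ n) && decide (i + 1 + km ≤ n)) = true := by simp [h1, h2]
  rw [hb]
  simpa using hx

theorem reverse_main (φ : List Bool → List Bool → Part (List Bool))
    (hφp : Partrec₂ φ) (L : Language Bool) (c : ℕ)
    (hc : ∀ n, ∃ p : List Bool, p.length ≤ c ∧ lamPrefix L n ∈ φ p (natToStr n)) :
    ComputablePred (· ∈ L) := by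
  classical
  -- the code for φ
  obtain ⟨cod, hcod0⟩ := exists_code.1 hφp
  have hcod : ∀ p y : List Bool,
      eval cod (Encodable.encode ((p, y) : List Bool × List Bool)) =
        (φ p y).map Encodable.encode := by
    intro p y
    rw [hcod0]
    simp [Encodable.encodek]
  have hEv := evalT_complete (φ := φ) (cod := cod) hcod
  -- the list of short programs
  set Ps : List (List Bool) := (List.range (2 ^ (c + 1))).map natToStr with hPsdef
  have hPs : ∀ p : List Bool, p.length ≤ c → p ∈ Ps := fun p hp =>
    List.mem_map.2 ⟨strToNat p, List.mem_range.2 (strToNat_lt hp), natToStr_strToNat p⟩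
  have hCand : ∀ n, lamPrefix L n ∈ Cand φ Ps n := by
    intro n
    obtain ⟨p, hpl, hpm⟩ := hc n
    exact ⟨lamPrefix_length L n, p, hPs p hpl, hpm⟩
  -- the minimal eventual bound
  set G : Set ℕ := {v | ∃ k N, ∀ n, N ≤ n → cnt φ L Ps k n ≤ v} with hGdef
  have hGne : G.Nonempty := ⟨Ps.length, 0, 0, fun n _ => cnt_le 0 n⟩
  obtain ⟨km, NN, hmN⟩ := Nat.sInf_mem hGne
  have hm1 : 1 ≤ sInf G := by
    by_contra h
    have h0 : sInf G = 0 := by omega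
    have h1 := hmN (max NN km) (le_max_left _ _)
    have h2 := cnt_pos (le_max_right NN km) (hCand (max NN km))
    omega
  have hits : ∀ k N, ∃ n, N ≤ n ∧ sInf G ≤ cnt φ L Ps k n := by
    intro k N
    by_contra h
    push_neg at h
    have hG' : sInf G - 1 ∈ G := ⟨k, N, fun n hn => by have := h n hn; omega⟩
    have := Nat.sInf_le hG'
    omega
  set σv : List Bool := lamPrefix L km with hσv
  have hσ : σv.length = km := lamPrefix_length L km
  -- membership extraction for candL
  have hxmem : ∀ {n t : ℕ} {x : List Bool}, km ≤ n → x ∈ candL cod Ps σv km n t →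
      x ∈ Cand φ Ps n ∧ σv <+: x ∧ x.length = n := by
    intro n t x hn hx
    rw [mem_candL_iff hσ hn] at hx
    obtain ⟨h1, h2, p, hp, hev⟩ := hx
    exact ⟨⟨h1, p, hp, (hEv p _ x).2 ⟨t, hev⟩⟩, h2, h1⟩
  -- soundness
  have hSound : ∀ i t b, HH cod Ps σv km (sInf G) NN i t = some b → b = ch L i := by
    intro i t b hb
    unfold HH at hb
    obtain ⟨x, hfind, hbx⟩ := Option.map_eq_some_iff.1 hb
    have hpred0 := List.find?_some hfind
    rw [decide_eq_true_eq] at hpred0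
    have hpred : sInf G ≤ goodCnt cod Ps σv km i x t := hpred0
    obtain ⟨n, hnt, hNn, hkn, hxin⟩ := mem_allCand (List.mem_of_find?_eq_some hfind)
    have hkmn : km ≤ n := by omega
    obtain ⟨hxC, hxσ, hxlen⟩ := hxmem hkmn hxin
    set W := cntS φ L Ps km n with hW
    have hWm : W.ncard ≤ sInf G := hmN n hNn
    set F := (candL cod Ps σv km x.length t).filter
      (fun y => decide (takeD (i + 1) y = takeD (i + 1) x)) with hF
    have hFlen : sInf G ≤ F.length := hpred
    have hFnodup : F.Nodup := (candL_nodup _ _).filter _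
    set S0 : Set (List Bool) := {y | y ∈ W ∧ takeD (i + 1) y = takeD (i + 1) x} with hS0
    have hS0W : S0 ⊆ W := fun y hy => hy.1
    have hS0fin : S0.Finite := (cntS_finite km n).subset hS0W
    have hFS : ∀ y ∈ F, y ∈ S0 := by
      intro y hy
      rw [hF, List.mem_filter] at hy
      obtain ⟨hy1, hy2⟩ := hy
      rw [hxlen] at hy1
      obtain ⟨hyC, hyσ, hylen⟩ := hxmem hkmn hy1
      exact ⟨⟨hyC, hyσ⟩, of_decide_eq_true hy2⟩
    have hS0card : sInf G ≤ S0.ncard :=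
      le_trans hFlen (length_le_ncard hFnodup hS0fin hFS)
    have hEqset : S0 = W :=
      Set.eq_of_subset_of_ncard_le hS0W (le_trans hWm hS0card) (cntS_finite km n)
    have hlamW : lamPrefix L n ∈ W := mem_cntS hkmn (hCand n)
    rw [← hEqset] at hlamW
    have htake := hlamW.2
    rw [takeD_lamPrefix (show i + 1 ≤ n by omega)] at htake
    rw [← hbx, (takeD_getD x (Nat.lt_succ_self i)).symm.trans
      (by rw [← htake, lamPrefix_getD (Nat.lt_succ_self i)])]
  -- termination
  have hTerm : ∀ i, ∃ t, (HH cod Ps σv km (sInf G) NN i t).isSome := by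
    intro i
    obtain ⟨n, hnN, hcnt⟩ := hits (i + 1 + km) (max NN (i + 1 + km))
    have hNn : NN ≤ n := le_trans (le_max_left _ _) hnN
    have hk0n : i + 1 + km ≤ n := le_trans (le_max_right _ _) hnN
    have hkmn : km ≤ n := by omega
    set V := cntS φ L Ps (i + 1 + km) n with hV
    have hVfin : V.Finite := cntS_finite _ _
    have hVsub : ∀ y ∈ V, y ∈ Cand φ Ps n ∧ σv <+: y ∧ lamPrefix L (i + 1 + km) <+: y := by
      rintro y ⟨hyC, hyP⟩
      exact ⟨hyC, (lamPrefix_prefix (by omega)).trans hyP, hyP⟩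
    have hex : ∀ y ∈ V, ∃ t, ∃ p ∈ Ps, EvalT cod t p (natToStr n) = some y := by
      rintro y ⟨⟨-, p, hp, hyφ⟩, -⟩
      obtain ⟨t, ht⟩ := (hEv p _ y).1 hyφ
      exact ⟨t, p, hp, ht⟩
    choose! f hf using hex
    set t1 := hVfin.toFinset.sup f with ht1
    have hVin : ∀ y ∈ V, y ∈ candL cod Ps σv km n (max n t1) := by
      intro y hy
      rw [mem_candL_iff hσ hkmn]
      obtain ⟨p, hp, hpt⟩ := hf y hy
      refine ⟨(hVsub y hy).1.1, (hVsub y hy).2.1, p, hp, ?_⟩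
      exact evalT_mono (le_trans (Finset.le_sup (hVfin.mem_toFinset.2 hy)) (le_max_right _ _)) hpt
    have hVne : V.Nonempty := by
      refine (Set.ncard_pos hVfin).1 ?_
      have : cnt φ L Ps (i + 1 + km) n = V.ncard := rfl
      omega
    obtain ⟨x0, hx0⟩ := hVne
    have hx0len : x0.length = n := (hVsub x0 hx0).1.1
    have hgood : sInf G ≤ goodCnt cod Ps σv km i x0 (max n t1) := by
      have hsub2 : ∀ y ∈ V, y ∈ (candL cod Ps σv km n (max n t1)).filter
          (fun y => decide (takeD (i + 1) y = takeD (i + 1) x0)) := by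
        intro y hy
        rw [List.mem_filter]
        refine ⟨hVin y hy, ?_⟩
        have h1 : takeD (i + 1) y = lamPrefix L (i + 1) :=
          takeD_of_prefix (hVsub y hy).2.2 (by omega)
        have h2 : takeD (i + 1) x0 = lamPrefix L (i + 1) :=
          takeD_of_prefix (hVsub x0 hx0).2.2 (by omega)
        simp [h1, h2]
      have hlen : V.ncard ≤ ((candL cod Ps σv km n (max n t1)).filter
          (fun y => decide (takeD (i + 1) y = takeD (i + 1) x0))).length :=
        ncard_le_length ((candL_nodup _ _).filter _) hsub2
      have : cnt φ L Ps (i + 1 + km) n = V.ncard := rfl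
      unfold goodCnt
      rw [hx0len]
      omega
    refine ⟨max n t1, ?_⟩
    unfold HH
    rw [Option.isSome_map]
    rw [List.find?_isSome]
    refine ⟨x0, ?_, decide_eq_true hgood⟩
    exact mem_allCand_intro (by omega : n < max n t1 + 1) hNn hk0n (hVin x0 hx0)
  -- monotonicity
  have hMonoMem : ∀ {i t t' : ℕ} {a : Bool}, t ≤ t' →
      HH cod Ps σv km (sInf G) NN i t = some a →
      (HH cod Ps σv km (sInf G) NN i t').isSome := by
    intro i t t' a htt hb
    unfold HH at hb
    obtain ⟨x, hfind, hbx⟩ := Option.map_eq_some_iff.1 hb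
    have hpred0 := List.find?_some hfind
    rw [decide_eq_true_eq] at hpred0
    have hpred : sInf G ≤ goodCnt cod Ps σv km i x t := hpred0
    obtain ⟨n, hnt, hNn, hkn, hxin⟩ := mem_allCand (List.mem_of_find?_eq_some hfind)
    have hkmn : km ≤ n := by omega
    have hxlen : x.length = n := (hxmem hkmn hxin).2.2
    have hx' : x ∈ candL cod Ps σv km n t' := candL_mono hσ hkmn htt hxin
    have hgood' : sInf G ≤ goodCnt cod Ps σv km i x t' := by
      refine le_trans hpred ?_
      unfold goodCnt
      refine length_le_length ((candL_nodup _ _).filter _) ((candL_nodup _ _).filter _) ?_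
      intro y hy
      rw [List.mem_filter] at hy ⊢
      rw [hxlen] at hy ⊢
      exact ⟨candL_mono hσ hkmn htt hy.1, hy.2⟩
    unfold HH
    rw [Option.isSome_map]
    rw [List.find?_isSome]
    exact ⟨x, mem_allCand_intro (by omega : n < t' + 1) hNn hkn hx', decide_eq_true hgood'⟩
  -- the characteristic function is computable
  have hrf : ∀ i, ch L i ∈ Nat.rfindOpt (HH cod Ps σv km (sInf G) NN i) := by
    intro i
    have hmono : ∀ {a : Bool} {m' n' : ℕ}, m' ≤ n' →
        a ∈ HH cod Ps σv km (sInf G) NN i m' → a ∈ HH cod Ps σv km (sInf G) NN i n' := by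
      intro a m' n' h ha
      have ha' : HH cod Ps σv km (sInf G) NN i m' = some a := Option.mem_def.1 ha
      obtain ⟨b', hb'⟩ := Option.isSome_iff_exists.1 (hMonoMem h ha')
      have h1 := hSound i n' b' hb'
      have h2 := hSound i m' a ha'
      rw [Option.mem_def, hb', h1, h2]
    rw [Nat.rfindOpt_mono hmono]
    obtain ⟨t, ht⟩ := hTerm i
    obtain ⟨b, hb⟩ := Option.isSome_iff_exists.1 ht
    exact ⟨t, by rw [Option.mem_def, hb, hSound i t b hb]⟩
  have hch : Computable (ch L) :=
    (Partrec.rfindOpt ((primrec_HH cod Ps σv km (sInf G) NN).to_comp)).of_eq_tot hrf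
  refine ComputablePred.computable_iff.2
    ⟨fun s => ch L (strToNat s), hch.comp primrec_strToNat.to_comp, ?_⟩
  funext s
  apply propext
  have hns : natToStr (strToNat s) = s := natToStr_strToNat s
  simp only [ch, hns, decide_eq_true_eq]

end KC

namespace KC

lemma nat_rec_map (f : List Bool → Bool) :
    ∀ n : ℕ, (Nat.rec [] (fun k acc => acc ++ [f (natToStr k)]) n : List Bool) =
      (List.range n).map fun i => f (natToStr i) := by
  intro n
  induction n with
  | zero => rfl
  | succ n ih => rw [List.range_succ, List.map_append]; simpa using ih

end KC

/-- Recursive KC Characterization: `L` is recursive (decidable) iff there is a constant `c`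
with `C(λ_{1:n} | n) ≤ c` for all `n`. -/
theorem kc_characterization_recursive (φ : List Bool → List Bool → Part (List Bool))
    (hφ : IsUniversal φ) (L : Language Bool) :
    ComputablePred (· ∈ L) ↔
      ∃ c : ℕ, ∀ n : ℕ, kolC φ (lamPrefix L n) (natToStr n) ≤ c := by
  constructor
  · intro hL
    obtain ⟨f, hfc, hfp⟩ := ComputablePred.computable_iff.1 hL
    have hlam : ∀ n, lamPrefix L n = (List.range n).map fun i => f (natToStr i) := by
      intro n
      unfold lamPrefix
      refine List.map_congr_left fun i _ => ?_
      have hfi := congrFun hfp (natToStr i)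
      split_ifs with h
      · rw [hfi] at h; exact h.symm
      · rw [hfi] at h
        simp only [Bool.not_eq_true] at h
        exact h.symm
    have hh : Computable₂ fun (_ : List Bool) (p : ℕ × List Bool) =>
        p.2 ++ [f (natToStr p.1)] :=
      (Computable.list_append.comp (Computable.snd.comp Computable.snd)
        (Computable.list_cons.comp
          (hfc.comp (KC.primrec_natToStr.to_comp.comp (Computable.fst.comp Computable.snd)))
          (Computable.const []))).to₂
    have hrec : Computable fun y : List Bool =>
        (Nat.rec [] (fun k acc => acc ++ [f (natToStr k)]) (KC.strToNat y) : List Bool) :=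
      Computable.nat_rec KC.primrec_strToNat.to_comp (Computable.const []) hh
    have hFcomp : Computable fun y : List Bool => lamPrefix L (KC.strToNat y) :=
      hrec.of_eq fun y => by rw [KC.nat_rec_map, ← hlam]
    have hψ : Partrec₂ fun (_ y : List Bool) =>
        Part.some (lamPrefix L (KC.strToNat y)) :=
      (hFcomp.comp Computable.snd).partrec
    obtain ⟨c, hsim⟩ := hφ.2 _ hψ
    refine ⟨c, fun n => ?_⟩
    obtain ⟨q, hq, hql⟩ := hsim [] (natToStr n) (lamPrefix L n)
      (by rw [KC.strToNat_natToStr]; exact Part.mem_some _)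
    exact le_trans (Nat.sInf_le ⟨q, rfl, hq⟩) (by simpa using hql)
  · rintro ⟨c, hc⟩
    refine KC.reverse_main φ hφ.1 L c fun n => ?_
    have hne : {k | ∃ p : List Bool, p.length = k ∧ lamPrefix L n ∈ φ p (natToStr n)}.Nonempty := by
      have hψ : Partrec₂ fun (_ _ : List Bool) => Part.some (lamPrefix L n) :=
        (Computable.const (lamPrefix L n)).partrec
      obtain ⟨c', hsim⟩ := hφ.2 _ hψ
      obtain ⟨q, hq, -⟩ := hsim [] (natToStr n) (lamPrefix L n) (Part.mem_some _)
      exact ⟨q.length, q, rfl, hq⟩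
    obtain ⟨p, hpl, hpm⟩ := Nat.sInf_mem hne
    exact ⟨p, by rw [hpl]; exact hc n, hpm⟩
end
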